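/- arXiv:1706.04768 — 3 statements merged into one kernel-verified Lean document; each statement's English description precedes it below -/
import Mathlib

section
/- Let F : ℝ×ℝⁿ → ℝ^{m×n} and D : ℝ×ℝⁿ → ℝᵐ be smooth, set P_i = Σ_α F_{αi} D_α, ξ(F) = det(I_n + FᵀF), h = √(|D|² + |P|² + ξ(F)) > 0, and ξ'(F)_{αi} = ξ(F) Σ_j ((I_n+FᵀF)⁻¹)_{ij} F_{αj}. Assume (F,D) solves: ∂_t F_{αi} + ∂_i((D_α + Σ_j F_{αj}P_j)/h) = 0, ∂_t D_α + ∂_i((D_α P_i + ξ'(F)_{αi})/h) = 0, and ∂_j F_{αi} = ∂_i F_{αj} for all α,i,j (repeated indices summed). Then the energy density h satisfies the conservation law ∂_t h + Σ_i ∂_i P_i = 0. -/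
open Matrix

/-- Time derivative `∂_t f` of a function of `(t,x) ∈ ℝ × ℝⁿ`. -/
noncomputable def pt {n : ℕ} (f : ℝ × (Fin n → ℝ) → ℝ) (p : ℝ × (Fin n → ℝ)) : ℝ :=
  fderiv ℝ f p (1, 0)

/-- Spatial partial derivative `∂_i f` of a function of `(t,x) ∈ ℝ × ℝⁿ`. -/
noncomputable def px {n : ℕ} (i : Fin n) (f : ℝ × (Fin n → ℝ) → ℝ) (p : ℝ × (Fin n → ℝ)) : ℝ :=
  fderiv ℝ f p (0, Pi.single i 1)


section pd
variable {E : Type*} [NormedAddCommGroup E] [NormedSpace ℝ E]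

noncomputable def pd (v : E) (f : E → ℝ) (x : E) : ℝ := fderiv ℝ f x v

lemma HasFDerivAt.pd_eq {f : E → ℝ} {f' : E →L[ℝ] ℝ} {x : E} (h : HasFDerivAt f f' x) (v : E) :
    pd v f x = f' v := by rw [pd, h.fderiv]

lemma pd_add {f g : E → ℝ} {x : E} (hf : DifferentiableAt ℝ f x) (hg : DifferentiableAt ℝ g x)
    (v : E) : pd v (fun y => f y + g y) x = pd v f x + pd v g x := by
  rw [(hf.hasFDerivAt.fun_add hg.hasFDerivAt).pd_eq v]; rfl

lemma pd_mul {f g : E → ℝ} {x : E} (hf : DifferentiableAt ℝ f x) (hg : DifferentiableAt ℝ g x)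
    (v : E) : pd v (fun y => f y * g y) x = f x * pd v g x + g x * pd v f x := by
  rw [(hf.hasFDerivAt.fun_mul hg.hasFDerivAt).pd_eq v]; rfl

lemma pd_sum {ι : Type*} {s : Finset ι} {f : ι → E → ℝ} {x : E}
    (hf : ∀ i ∈ s, DifferentiableAt ℝ (f i) x) (v : E) :
    pd v (fun y => ∑ i ∈ s, f i y) x = ∑ i ∈ s, pd v (f i) x := by
  rw [(HasFDerivAt.fun_sum (fun i hi => (hf i hi).hasFDerivAt)).pd_eq v]
  simp [ContinuousLinearMap.sum_apply, pd]

lemma pd_div {f g : E → ℝ} {x : E} (hf : DifferentiableAt ℝ f x) (hg : DifferentiableAt ℝ g x)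
    (hgx : g x ≠ 0) (v : E) :
    pd v (fun y => f y / g y) x = (pd v f x * g x - f x * pd v g x) / g x ^ 2 := by
  have h1 : HasFDerivAt (fun y => (g y)⁻¹) ((-(g x ^ 2)⁻¹) • fderiv ℝ g x) x := by
    simpa [Function.comp_def] using (hasDerivAt_inv hgx).comp_hasFDerivAt x hg.hasFDerivAt
  have h2 := hf.hasFDerivAt.fun_mul h1
  have : (fun y => f y / g y) = fun y => f y * (g y)⁻¹ := by
    funext y; rw [div_eq_mul_inv]
  rw [this, h2.pd_eq v]
  simp only [ContinuousLinearMap.add_apply, ContinuousLinearMap.smul_apply, smul_eq_mul, pd]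
  field_simp
  ring

lemma pd_sqrt {f : E → ℝ} {x : E} (hf : DifferentiableAt ℝ f x) (hfx : 0 < f x) (v : E) :
    pd v (fun y => Real.sqrt (f y)) x = pd v f x / (2 * Real.sqrt (f x)) := by
  rw [(hf.hasFDerivAt.sqrt hfx.ne').pd_eq v]
  simp [pd, div_eq_inv_mul, mul_comm]

lemma pd_sq {f : E → ℝ} {x : E} (hf : DifferentiableAt ℝ f x) (v : E) :
    pd v (fun y => f y ^ 2) x = 2 * f x * pd v f x := by
  have : (fun y => f y ^ 2) = fun y => f y * f y := by funext y; ring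
  rw [this, pd_mul hf hf]; ring


end pd

lemma det_sum_form {N : ℕ} (M : Matrix (Fin N) (Fin N) ℝ) :
    M.det = ∑ σ : Equiv.Perm (Fin N), ((Equiv.Perm.sign σ : ℤ) : ℝ) * ∏ i, M (σ i) i := by
  simp [Matrix.det_apply', zsmul_eq_mul]

lemma cramer_single_eq_adjugate (n : Type*) [Fintype n] [DecidableEq n]
    (A : Matrix n n ℝ) (r i : n) :
    Matrix.cramer A (Pi.single r 1) i = adjugate A i r := by
  have h1 : adjugate A i r = (adjugate Aᵀ) r i := by rw [← Matrix.adjugate_transpose]; rfl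
  rw [h1, Matrix.adjugate_def]
  simp only [Matrix.of_apply, Matrix.transpose_transpose]

lemma det_updateColumn_linear {N : ℕ} (A : Matrix (Fin N) (Fin N) ℝ) (i : Fin N) (b : Fin N → ℝ) :
    (A.updateCol i b).det = ∑ r, b r * adjugate A i r := by
  rw [← Matrix.cramer_apply]
  have hb : b = ∑ r, b r • (Pi.single r 1 : Fin N → ℝ) := by
    funext k; simp [Finset.sum_apply, Pi.single_apply]
  conv_lhs => rw [hb]
  rw [map_sum]
  simp only [_root_.map_smul, Finset.sum_apply, Pi.smul_apply, smul_eq_mul]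
  exact Finset.sum_congr rfl fun r _ => by rw [cramer_single_eq_adjugate]

lemma jacobi {E : Type*} [NormedAddCommGroup E] [NormedSpace ℝ E] {N : ℕ}
    {f : E → Matrix (Fin N) (Fin N) ℝ} {f' : Fin N → Fin N → (E →L[ℝ] ℝ)} {x : E}
    (hf : ∀ i j, HasFDerivAt (fun q => f q i j) (f' i j) x) :
    HasFDerivAt (fun q => (f q).det) (∑ r, ∑ c, adjugate (f x) c r • f' r c) x := by
  have hdet : (fun q => (f q).det)
      = fun q => ∑ σ : Equiv.Perm (Fin N), ((Equiv.Perm.sign σ : ℤ) : ℝ) * ∏ i, f q (σ i) i := by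
    funext q; exact det_sum_form _
  rw [hdet]
  have hterm : ∀ σ : Equiv.Perm (Fin N), HasFDerivAt
      (fun q => ((Equiv.Perm.sign σ : ℤ) : ℝ) * ∏ i, f q (σ i) i)
      (((Equiv.Perm.sign σ : ℤ) : ℝ) •
        ∑ i, (∏ j ∈ Finset.univ.erase i, f x (σ j) j) • f' (σ i) i) x := fun σ =>
    (HasFDerivAt.finset_prod (fun i _ => hf (σ i) i)).const_mul _
  have hsum := HasFDerivAt.fun_sum (u := Finset.univ) (fun σ _ => hterm σ)
  refine hsum.congr_fderiv (Eq.symm ?_)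
  ext v
  simp only [ContinuousLinearMap.coe_sum', Finset.sum_apply, ContinuousLinearMap.coe_smul',
    Pi.smul_apply, smul_eq_mul, Finset.mul_sum]
  conv_lhs => rw [Finset.sum_comm]
  conv_rhs => rw [Finset.sum_comm]
  refine Finset.sum_congr rfl fun i _ => ?_
  have key : ∀ σ : Equiv.Perm (Fin N),
      ((Equiv.Perm.sign σ : ℤ) : ℝ) * ((∏ j ∈ Finset.univ.erase i, f x (σ j) j) * f' (σ i) i v)
      = ((Equiv.Perm.sign σ : ℤ) : ℝ) *
        ∏ j, (f x).updateCol i (fun r => f' r i v) (σ j) j := by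
    intro σ
    congr 1
    rw [← Finset.mul_prod_erase Finset.univ _ (Finset.mem_univ i)]
    rw [Matrix.updateCol_self, mul_comm]
    congr 1
    exact Finset.prod_congr rfl fun j hj =>
      (Matrix.updateCol_ne (Finset.ne_of_mem_erase hj)).symm
  calc (∑ r, adjugate (f x) i r * f' r i v)
      = ((f x).updateCol i (fun r => f' r i v)).det := by
        rw [det_updateColumn_linear]
        exact Finset.sum_congr rfl fun c _ => by ring
    _ = ∑ σ : Equiv.Perm (Fin N), ((Equiv.Perm.sign σ : ℤ) : ℝ) *
          ((∏ j ∈ Finset.univ.erase i, f x (σ j) j) * f' (σ i) i v) := by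
        rw [det_sum_form]
        exact Finset.sum_congr rfl fun σ _ => (key σ).symm

lemma M_posdef {m n : ℕ} (F : Matrix (Fin m) (Fin n) ℝ) :
    (1 + Fᵀ * F).PosDef := by
  have h1 : (Fᵀ * F).PosSemidef := by
    have := Matrix.posSemidef_conjTranspose_mul_self F
    simpa [Matrix.conjTranspose_eq_transpose_of_trivial] using this
  exact Matrix.PosDef.add_posSemidef Matrix.PosDef.one h1

lemma M_det_pos {m n : ℕ} (F : Matrix (Fin m) (Fin n) ℝ) : 0 < (1 + Fᵀ * F).det :=
  (M_posdef F).det_pos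

lemma swap_helper {A B : Type*} [Fintype A] [Fintype B] (f : A → ℝ) (g : A → B → ℝ) :
    ∑ a, f a * ∑ b, g a b = ∑ b, ∑ a, f a * g a b := by
  simp_rw [Finset.mul_sum]; exact Finset.sum_comm

lemma key_alg' {m n : ℕ} (F : Matrix (Fin m) (Fin n) ℝ) (D : Fin m → ℝ)
    (P : Fin n → ℝ) (hP : ∀ j, P j = ∑ β, F β j * D β)
    (ξ : ℝ) (Ninv : Matrix (Fin n) (Fin n) ℝ)
    (hN : ∀ i j, ∑ k, Ninv i k * ((if k = j then (1:ℝ) else 0) + ∑ α, F α k * F α j)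
      = if i = j then 1 else 0)
    (i : Fin n) :
    ∑ α, ((D α + ∑ j, F α j * P j) * (D α * P i + ξ * ∑ j, Ninv i j * F α j))
    = ((∑ α, (D α)^2) + (∑ j, (P j)^2) + ξ) * P i := by
  have hK : ∀ j, ∑ k, Ninv i k * (∑ α, F α k * F α j)
      = (if i = j then (1:ℝ) else 0) - Ninv i j := by
    intro j
    have h := hN i j
    simp only [mul_add, Finset.sum_add_distrib] at h
    have h2 : ∑ k, Ninv i k * (if k = j then (1:ℝ) else 0) = Ninv i j := by
      simp [mul_ite, mul_one, mul_zero]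
    rw [h2] at h
    linarith
  have T1 : ∑ α, D α * (D α * P i) = (∑ α, (D α)^2) * P i := by
    rw [Finset.sum_mul]
    exact Finset.sum_congr rfl fun α _ => by ring
  have T2 : ∑ α, D α * (ξ * ∑ j, Ninv i j * F α j) = ξ * ∑ j, Ninv i j * P j := by
    calc ∑ α, D α * (ξ * ∑ j, Ninv i j * F α j)
        = ∑ j, ∑ α, D α * (ξ * (Ninv i j * F α j)) := by
          simp_rw [Finset.mul_sum]; exact Finset.sum_comm
      _ = ∑ j, ξ * (Ninv i j * P j) := by
          refine Finset.sum_congr rfl fun j _ => ?_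
          rw [hP j]
          simp only [Finset.mul_sum]
          exact Finset.sum_congr rfl fun α _ => by ring
      _ = ξ * ∑ j, Ninv i j * P j := by rw [Finset.mul_sum]
  have T3 : ∑ α, (∑ j, F α j * P j) * D α = ∑ j, (P j)^2 := by
    calc ∑ α, (∑ j, F α j * P j) * D α
        = ∑ j, ∑ α, (F α j * P j) * D α := by
          simp_rw [Finset.sum_mul]; exact Finset.sum_comm
      _ = ∑ j, (P j)^2 := by
          refine Finset.sum_congr rfl fun j _ => ?_
          have h3 : ∑ α, (F α j * P j) * D α = (∑ α, F α j * D α) * P j := by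
            rw [Finset.sum_mul]
            exact Finset.sum_congr rfl fun α _ => by ring
          rw [h3, ← hP j]; ring
  have T4 : ∑ α, (∑ j, F α j * P j) * (ξ * ∑ k, Ninv i k * F α k)
      = ξ * (P i - ∑ j, Ninv i j * P j) := by
    calc ∑ α, (∑ j, F α j * P j) * (ξ * ∑ k, Ninv i k * F α k)
        = ∑ j, ∑ α, (F α j * P j) * (ξ * ∑ k, Ninv i k * F α k) := by
          simp_rw [Finset.sum_mul]; exact Finset.sum_comm
      _ = ∑ j, ξ * P j * ∑ k, Ninv i k * (∑ α, F α k * F α j) := by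
          refine Finset.sum_congr rfl fun j _ => ?_
          simp only [Finset.mul_sum, Finset.sum_mul]
          rw [Finset.sum_comm]
          exact Finset.sum_congr rfl fun k _ => Finset.sum_congr rfl fun α _ => by ring
      _ = ∑ j, ξ * P j * ((if i = j then (1:ℝ) else 0) - Ninv i j) :=
          Finset.sum_congr rfl fun j _ => by rw [hK j]
      _ = ξ * (P i - ∑ j, Ninv i j * P j) := by
          simp only [mul_sub, mul_ite, mul_one, mul_zero, Finset.sum_sub_distrib,
            Finset.sum_ite_eq, Finset.mem_univ, if_true]
          have h4 : ∑ j, ξ * P j * Ninv i j = ξ * ∑ j, Ninv i j * P j := by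
            rw [Finset.mul_sum]
            exact Finset.sum_congr rfl fun j _ => by ring
          rw [h4]
  calc ∑ α, ((D α + ∑ j, F α j * P j) * (D α * P i + ξ * ∑ j, Ninv i j * F α j))
      = ∑ α, (D α * (D α * P i) + D α * (ξ * ∑ j, Ninv i j * F α j)
          + (((∑ j, F α j * P j) * D α) * P i
          + (∑ j, F α j * P j) * (ξ * ∑ j, Ninv i j * F α j))) :=
        Finset.sum_congr rfl fun α _ => by ring
    _ = (∑ α, D α * (D α * P i)) + (∑ α, D α * (ξ * ∑ j, Ninv i j * F α j))
          + ((∑ α, ((∑ j, F α j * P j) * D α) * P i)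
          + ∑ α, (∑ j, F α j * P j) * (ξ * ∑ j, Ninv i j * F α j)) := by
        rw [Finset.sum_add_distrib, Finset.sum_add_distrib, Finset.sum_add_distrib]
    _ = (∑ α, (D α)^2) * P i + ξ * (∑ j, Ninv i j * P j)
          + ((∑ j, (P j)^2) * P i + ξ * (P i - ∑ j, Ninv i j * P j)) := by
        rw [T1, T2, T4, ← Finset.sum_mul, T3]
    _ = ((∑ α, (D α)^2) + (∑ j, (P j)^2) + ξ) * P i := by ring

lemma pd_const {E : Type*} [NormedAddCommGroup E] [NormedSpace ℝ E] (c : ℝ) (v x : E) :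
    pd v (fun _ => c) x = 0 := by simp [pd]

lemma regroup {m n : ℕ} (Dp : Fin m → ℝ) (Fp : Matrix (Fin m) (Fin n) ℝ) (Pp : Fin n → ℝ)
    (Xp : Fin m → Fin n → ℝ) (dD : Fin m → ℝ) (dF : Matrix (Fin m) (Fin n) ℝ) :
    (∑ α, 2 * Dp α * dD α) + (∑ i, 2 * Pp i * (∑ α, (Fp α i * dD α + Dp α * dF α i)))
      + (∑ α, ∑ i, 2 * Xp α i * dF α i)
    = 2 * ((∑ α, (Dp α + ∑ j, Fp α j * Pp j) * dD α)
      + ∑ α, ∑ i, (Dp α * Pp i + Xp α i) * dF α i) := by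
  have hmid : ∑ i, 2 * Pp i * (∑ α, (Fp α i * dD α + Dp α * dF α i))
      = (∑ α, (2 * ∑ j, Fp α j * Pp j) * dD α) + ∑ α, ∑ i, 2 * (Dp α * Pp i) * dF α i := by
    calc ∑ i, 2 * Pp i * (∑ α, (Fp α i * dD α + Dp α * dF α i))
        = ∑ α, ∑ i, (2 * Pp i * (Fp α i * dD α) + 2 * Pp i * (Dp α * dF α i)) := by
          simp_rw [Finset.mul_sum]
          rw [Finset.sum_comm]
          exact Finset.sum_congr rfl fun α _ => Finset.sum_congr rfl fun i _ => by ring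
      _ = (∑ α, ∑ i, 2 * Pp i * (Fp α i * dD α)) + ∑ α, ∑ i, 2 * (Dp α * Pp i) * dF α i := by
          rw [← Finset.sum_add_distrib]
          refine Finset.sum_congr rfl fun α _ => ?_
          rw [← Finset.sum_add_distrib]
          exact Finset.sum_congr rfl fun i _ => by ring
      _ = (∑ α, (2 * ∑ j, Fp α j * Pp j) * dD α) + ∑ α, ∑ i, 2 * (Dp α * Pp i) * dF α i := by
          congr 1
          refine Finset.sum_congr rfl fun α _ => ?_
          simp only [Finset.mul_sum, Finset.sum_mul]
          exact Finset.sum_congr rfl fun i _ => by ring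
  rw [hmid]
  have hsplit : ∀ α, ∑ i, (Dp α * Pp i + Xp α i) * dF α i
      = (∑ i, (Dp α * Pp i) * dF α i) + ∑ i, Xp α i * dF α i := by
    intro α
    rw [← Finset.sum_add_distrib]
    exact Finset.sum_congr rfl fun i _ => by ring
  have c1 : 2 * (∑ α, (Dp α + ∑ j, Fp α j * Pp j) * dD α)
      = (∑ α, 2 * Dp α * dD α) + ∑ α, (2 * ∑ j, Fp α j * Pp j) * dD α := by
    rw [Finset.mul_sum, ← Finset.sum_add_distrib]
    exact Finset.sum_congr rfl fun α _ => by ring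
  have c2 : 2 * (∑ α, ∑ i, (Dp α * Pp i + Xp α i) * dF α i)
      = (∑ α, ∑ i, 2 * (Dp α * Pp i) * dF α i) + ∑ α, ∑ i, 2 * Xp α i * dF α i := by
    rw [Finset.mul_sum, ← Finset.sum_add_distrib]
    refine Finset.sum_congr rfl fun α _ => ?_
    rw [Finset.mul_sum, ← Finset.sum_add_distrib]
    exact Finset.sum_congr rfl fun i _ => by ring
  rw [mul_add, c1, c2]
  ring
lemma jacobi_regroup {m n : ℕ} (X : Fin n → Fin n → ℝ) (hX : ∀ r c, X c r = X r c)
    (Fp : Fin m → Fin n → ℝ) (dF : Fin m → Fin n → ℝ) :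
    ∑ r, ∑ c, ∑ α, (X c r * (Fp α c * dF α r) + X c r * (Fp α r * dF α c))
    = ∑ α, ∑ i, 2 * (∑ j, X i j * Fp α j) * dF α i := by
  simp only [Finset.sum_add_distrib]
  have S1 : ∑ r, ∑ c, ∑ α, X c r * (Fp α c * dF α r)
      = ∑ α, ∑ r, (∑ c, X r c * Fp α c) * dF α r := by
    calc ∑ r, ∑ c, ∑ α, X c r * (Fp α c * dF α r)
        = ∑ r, ∑ α, (∑ c, X r c * Fp α c) * dF α r := by
          refine Finset.sum_congr rfl fun r _ => ?_
          rw [Finset.sum_comm]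
          refine Finset.sum_congr rfl fun α _ => ?_
          rw [Finset.sum_mul]
          exact Finset.sum_congr rfl fun c _ => by rw [hX r c]; ring
      _ = ∑ α, ∑ r, (∑ c, X r c * Fp α c) * dF α r := Finset.sum_comm
  have S2 : ∑ r, ∑ c, ∑ α, X c r * (Fp α r * dF α c)
      = ∑ α, ∑ c, (∑ r, X c r * Fp α r) * dF α c := by
    calc ∑ r, ∑ c, ∑ α, X c r * (Fp α r * dF α c)
        = ∑ c, ∑ r, ∑ α, X c r * (Fp α r * dF α c) := Finset.sum_comm
      _ = ∑ c, ∑ α, (∑ r, X c r * Fp α r) * dF α c := by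
          refine Finset.sum_congr rfl fun c _ => ?_
          rw [Finset.sum_comm]
          refine Finset.sum_congr rfl fun α _ => ?_
          rw [Finset.sum_mul]
          exact Finset.sum_congr rfl fun r _ => by ring
      _ = ∑ α, ∑ c, (∑ r, X c r * Fp α r) * dF α c := Finset.sum_comm
  rw [S1, S2, ← Finset.sum_add_distrib]
  refine Finset.sum_congr rfl fun α _ => ?_
  rw [← Finset.sum_add_distrib]
  exact Finset.sum_congr rfl fun i _ => by ring

lemma pt_eq_pd {n : ℕ} (f : ℝ × (Fin n → ℝ) → ℝ) (p : ℝ × (Fin n → ℝ)) :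
    pt f p = pd ((1:ℝ), (0 : Fin n → ℝ)) f p := rfl

lemma px_eq_pd {n : ℕ} (i : Fin n) (f : ℝ × (Fin n → ℝ) → ℝ) (p : ℝ × (Fin n → ℝ)) :
    px i f p = pd ((0:ℝ), Pi.single i (1:ℝ)) f p := rfl

/-- Conservation of the energy density: a solution of the extremal-surface system satisfies
`∂_t h + ∇·P = 0`. -/
theorem energy_conservation (m n : ℕ)
    (F : ℝ × (Fin n → ℝ) → Matrix (Fin m) (Fin n) ℝ)
    (D : ℝ × (Fin n → ℝ) → Fin m → ℝ)
    (hF : ∀ α i, ContDiff ℝ (⊤ : ℕ∞) fun p => F p α i)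
    (hD : ∀ α, ContDiff ℝ (⊤ : ℕ∞) fun p => D p α)
    (P : ℝ × (Fin n → ℝ) → Fin n → ℝ)
    (hP : P = fun p i => ∑ α, F p α i * D p α)
    (h : ℝ × (Fin n → ℝ) → ℝ)
    (hh : h = fun p =>
      Real.sqrt (∑ α, (D p α) ^ 2 + ∑ i, (P p i) ^ 2 + (1 + (F p)ᵀ * F p).det))
    (hpos : ∀ p, 0 < h p)
    (xi' : ℝ × (Fin n → ℝ) → Fin m → Fin n → ℝ)
    (hxi' : xi' = fun p α i => (1 + (F p)ᵀ * F p).det *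
      ∑ j, ((1 : Matrix (Fin n) (Fin n) ℝ) + (F p)ᵀ * F p)⁻¹ i j * F p α j)
    (heqF : ∀ p (α : Fin m) (i : Fin n),
      pt (fun q => F q α i) p
        + px i (fun q => (D q α + ∑ j, F q α j * P q j) / h q) p = 0)
    (heqD : ∀ p (α : Fin m),
      pt (fun q => D q α) p
        + ∑ i, px i (fun q => (D q α * P q i + xi' q α i) / h q) p = 0)
    (hcurl : ∀ p (α : Fin m) (i j : Fin n),
      px j (fun q => F q α i) p = px i (fun q => F q α j) p) :
    ∀ p, pt h p + ∑ i, px i (fun q => P q i) p = 0 := by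
  intro p
  have hne : h p ≠ 0 := (hpos p).ne'
  -- basic differentiability
  have hdF : ∀ (q : ℝ × (Fin n → ℝ)) (α : Fin m) (i : Fin n),
      DifferentiableAt ℝ (fun q => F q α i) q :=
    fun q α i => ((hF α i).differentiable (by simp)).differentiableAt
  have hdD : ∀ (q : ℝ × (Fin n → ℝ)) (α : Fin m), DifferentiableAt ℝ (fun q => D q α) q :=
    fun q α => ((hD α).differentiable (by simp)).differentiableAt
  have hdP : ∀ (q : ℝ × (Fin n → ℝ)) (i : Fin n), DifferentiableAt ℝ (fun q => P q i) q := by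
    intro q i
    simp only [hP]
    exact DifferentiableAt.fun_sum fun α _ => (hdF q α i).fun_mul (hdD q α)
  have hMentry : ∀ (q : ℝ × (Fin n → ℝ)) (i j : Fin n),
      ((1 : Matrix (Fin n) (Fin n) ℝ) + (F q)ᵀ * F q) i j = (if i = j then (1:ℝ) else 0) + ∑ α, F q α i * F q α j := by
    intro q i j
    simp [Matrix.add_apply, Matrix.one_apply, Matrix.mul_apply, Matrix.transpose_apply]
  have hdM : ∀ (q : ℝ × (Fin n → ℝ)) (i j : Fin n),
      DifferentiableAt ℝ (fun q => ((1 : Matrix (Fin n) (Fin n) ℝ) + (F q)ᵀ * F q) i j) q := by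
    intro q i j
    have e : (fun q => ((1 : Matrix (Fin n) (Fin n) ℝ) + (F q)ᵀ * F q) i j)
        = fun q => (if i = j then (1:ℝ) else 0) + ∑ α, F q α i * F q α j :=
      funext fun q => hMentry q i j
    rw [e]
    exact (differentiableAt_const _).fun_add
      (DifferentiableAt.fun_sum fun α _ => (hdF q α i).fun_mul (hdF q α j))
  have hdXi : ∀ q : ℝ × (Fin n → ℝ), DifferentiableAt ℝ (fun q => ((1 : Matrix (Fin n) (Fin n) ℝ) + (F q)ᵀ * F q).det) q :=
    fun q => (jacobi (fun i j => (hdM q i j).hasFDerivAt)).differentiableAt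
  have hdet_pos : ∀ q : ℝ × (Fin n → ℝ), 0 < ((1 : Matrix (Fin n) (Fin n) ℝ) + (F q)ᵀ * F q).det := fun q => M_det_pos (F q)
  have hdAdj : ∀ (q : ℝ × (Fin n → ℝ)) (i j : Fin n),
      DifferentiableAt ℝ (fun q => adjugate ((1 : Matrix (Fin n) (Fin n) ℝ) + (F q)ᵀ * F q) i j) q := by
    intro q i j
    have e : (fun q => adjugate ((1 : Matrix (Fin n) (Fin n) ℝ) + (F q)ᵀ * F q) i j)
        = fun q => (((1 : Matrix (Fin n) (Fin n) ℝ) + (F q)ᵀ * F q).updateRow j (Pi.single i 1)).det :=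
      funext fun q => Matrix.adjugate_apply _ i j
    rw [e]
    have hent : ∀ (r c : Fin n),
        DifferentiableAt ℝ (fun q => (((1 : Matrix (Fin n) (Fin n) ℝ) + (F q)ᵀ * F q).updateRow j (Pi.single i 1)) r c) q := by
      intro r c
      have e2 : (fun q => (((1 : Matrix (Fin n) (Fin n) ℝ) + (F q)ᵀ * F q).updateRow j (Pi.single i 1)) r c)
          = fun q => if r = j then (Pi.single i 1 : Fin n → ℝ) c else ((1 : Matrix (Fin n) (Fin n) ℝ) + (F q)ᵀ * F q) r c :=
        funext fun q => by rw [Matrix.updateRow_apply]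
      rw [e2]
      by_cases hrj : r = j
      · simp only [if_pos hrj]
        exact differentiableAt_const _
      · simp only [if_neg hrj]
        exact hdM q r c
    exact (jacobi (fun r c => (hent r c).hasFDerivAt)).differentiableAt
  have hxi2 : ∀ (q : ℝ × (Fin n → ℝ)) (α : Fin m) (i : Fin n),
      xi' q α i = ∑ j, adjugate ((1 : Matrix (Fin n) (Fin n) ℝ) + (F q)ᵀ * F q) i j * F q α j := by
    intro q α i
    simp only [hxi']
    have hdq : ((1 : Matrix (Fin n) (Fin n) ℝ) + (F q)ᵀ * F q).det ≠ 0 := (hdet_pos q).ne'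
    have hinv : ∀ j : Fin n, ((1 : Matrix (Fin n) (Fin n) ℝ) + (F q)ᵀ * F q)⁻¹ i j
        = (((1 : Matrix (Fin n) (Fin n) ℝ) + (F q)ᵀ * F q).det)⁻¹ * adjugate ((1 : Matrix (Fin n) (Fin n) ℝ) + (F q)ᵀ * F q) i j := by
      intro j
      rw [Matrix.inv_def, Matrix.smul_apply, Ring.inverse_eq_inv', smul_eq_mul]
    rw [Finset.mul_sum]
    refine Finset.sum_congr rfl fun j _ => ?_
    rw [hinv j]
    field_simp
  have hdxi' : ∀ (q : ℝ × (Fin n → ℝ)) (α : Fin m) (i : Fin n),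
      DifferentiableAt ℝ (fun q => xi' q α i) q := by
    intro q α i
    have e : (fun q => xi' q α i) = fun q => ∑ j, adjugate ((1 : Matrix (Fin n) (Fin n) ℝ) + (F q)ᵀ * F q) i j * F q α j :=
      funext fun q => hxi2 q α i
    rw [e]
    exact DifferentiableAt.fun_sum fun j _ => (hdAdj q i j).fun_mul (hdF q α j)
  have hgpos : ∀ q : ℝ × (Fin n → ℝ),
      0 < (∑ α, (D q α)^2) + (∑ i, (P q i)^2) + ((1 : Matrix (Fin n) (Fin n) ℝ) + (F q)ᵀ * F q).det := by
    intro q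
    have h1 : (0:ℝ) ≤ ∑ α, (D q α)^2 := Finset.sum_nonneg fun _ _ => sq_nonneg _
    have h2 : (0:ℝ) ≤ ∑ i, (P q i)^2 := Finset.sum_nonneg fun _ _ => sq_nonneg _
    linarith [hdet_pos q]
  have hdg : ∀ q : ℝ × (Fin n → ℝ), DifferentiableAt ℝ
      (fun q => (∑ α, (D q α)^2) + (∑ i, (P q i)^2) + ((1 : Matrix (Fin n) (Fin n) ℝ) + (F q)ᵀ * F q).det) q := by
    intro q
    exact ((DifferentiableAt.fun_sum fun α _ => (hdD q α).fun_pow 2).fun_add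
      (DifferentiableAt.fun_sum fun i _ => (hdP q i).fun_pow 2)).fun_add (hdXi q)
  have hdh : ∀ q : ℝ × (Fin n → ℝ), DifferentiableAt ℝ h q := by
    intro q
    rw [hh]
    exact DifferentiableAt.sqrt (hdg q) (hgpos q).ne'
  have hsq : ∀ q : ℝ × (Fin n → ℝ),
      h q ^ 2 = (∑ α, (D q α)^2) + (∑ i, (P q i)^2) + ((1 : Matrix (Fin n) (Fin n) ℝ) + (F q)ᵀ * F q).det := by
    intro q
    rw [hh]
    exact Real.sq_sqrt (hgpos q).le
  have hdA : ∀ (q : ℝ × (Fin n → ℝ)) (α : Fin m),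
      DifferentiableAt ℝ (fun q => D q α + ∑ j, F q α j * P q j) q :=
    fun q α => (hdD q α).fun_add (DifferentiableAt.fun_sum fun j _ => (hdF q α j).fun_mul (hdP q j))
  have hdB : ∀ (q : ℝ × (Fin n → ℝ)) (α : Fin m) (i : Fin n),
      DifferentiableAt ℝ (fun q => D q α * P q i + xi' q α i) q :=
    fun q α i => ((hdD q α).fun_mul (hdP q i)).fun_add (hdxi' q α i)
  -- pd of P entries
  have pdP : ∀ (v : ℝ × (Fin n → ℝ)) (i : Fin n), pd v (fun q => P q i) p
      = ∑ α, (F p α i * pd v (fun q => D q α) p + D p α * pd v (fun q => F q α i) p) := by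
    intro v i
    have e : (fun q => P q i) = fun q => ∑ α, F q α i * D q α := by
      funext q; rw [hP]
    rw [e, pd_sum (fun α _ => (hdF p α i).fun_mul (hdD p α))]
    exact Finset.sum_congr rfl fun α _ => pd_mul (hdF p α i) (hdD p α) v
  -- symmetry of adjugate
  have hadj_symm : ∀ (q : ℝ × (Fin n → ℝ)) (r c : Fin n),
      adjugate ((1 : Matrix (Fin n) (Fin n) ℝ) + (F q)ᵀ * F q) c r = adjugate ((1 : Matrix (Fin n) (Fin n) ℝ) + (F q)ᵀ * F q) r c := by
    intro q r c
    have hMs : ((1 : Matrix (Fin n) (Fin n) ℝ) + (F q)ᵀ * F q)ᵀ = 1 + (F q)ᵀ * F q := by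
      rw [Matrix.transpose_add, Matrix.transpose_one, Matrix.transpose_mul,
        Matrix.transpose_transpose]
    calc adjugate ((1 : Matrix (Fin n) (Fin n) ℝ) + (F q)ᵀ * F q) c r
        = (adjugate ((1 : Matrix (Fin n) (Fin n) ℝ) + (F q)ᵀ * F q))ᵀ r c := rfl
      _ = adjugate (((1 : Matrix (Fin n) (Fin n) ℝ) + (F q)ᵀ * F q)ᵀ) r c := by rw [Matrix.adjugate_transpose]
      _ = adjugate ((1 : Matrix (Fin n) (Fin n) ℝ) + (F q)ᵀ * F q) r c := by rw [hMs]
  -- Jacobi formula, symmetrized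
  have pdXi : ∀ v : ℝ × (Fin n → ℝ), pd v (fun q => ((1 : Matrix (Fin n) (Fin n) ℝ) + (F q)ᵀ * F q).det) p
      = ∑ α, ∑ i, 2 * xi' p α i * pd v (fun q => F q α i) p := by
    intro v
    have hj := jacobi (fun i j => (hdM p i j).hasFDerivAt)
    rw [hj.pd_eq v]
    simp only [ContinuousLinearMap.coe_sum', Finset.sum_apply, ContinuousLinearMap.coe_smul',
      Pi.smul_apply, smul_eq_mul]
    have hent : ∀ (r c : Fin n), fderiv ℝ (fun q => ((1 : Matrix (Fin n) (Fin n) ℝ) + (F q)ᵀ * F q) r c) p v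
        = ∑ α, (F p α c * pd v (fun q => F q α r) p + F p α r * pd v (fun q => F q α c) p) := by
      intro r c
      have e : (fun q => ((1 : Matrix (Fin n) (Fin n) ℝ) + (F q)ᵀ * F q) r c)
          = fun q => (if r = c then (1:ℝ) else 0) + ∑ α, F q α r * F q α c :=
        funext fun q => hMentry q r c
      have e2 : fderiv ℝ (fun q => ((1 : Matrix (Fin n) (Fin n) ℝ) + (F q)ᵀ * F q) r c) p v
          = pd v (fun q => ((1 : Matrix (Fin n) (Fin n) ℝ) + (F q)ᵀ * F q) r c) p := rfl
      rw [e2, e, pd_add (differentiableAt_const _)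
        (DifferentiableAt.fun_sum fun α _ => (hdF p α r).fun_mul (hdF p α c)) v, pd_const,
        pd_sum (fun α _ => (hdF p α r).fun_mul (hdF p α c)) v, zero_add]
      exact Finset.sum_congr rfl fun α _ => by rw [pd_mul (hdF p α r) (hdF p α c) v]; ring
    calc ∑ r, ∑ c, adjugate ((1 : Matrix (Fin n) (Fin n) ℝ) + (F p)ᵀ * F p) c r
            * fderiv ℝ (fun q => ((1 : Matrix (Fin n) (Fin n) ℝ) + (F q)ᵀ * F q) r c) p v
        = ∑ r, ∑ c, ∑ α, (adjugate ((1 : Matrix (Fin n) (Fin n) ℝ) + (F p)ᵀ * F p) c r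
              * (F p α c * pd v (fun q => F q α r) p)
            + adjugate ((1 : Matrix (Fin n) (Fin n) ℝ) + (F p)ᵀ * F p) c r * (F p α r * pd v (fun q => F q α c) p)) := by
          refine Finset.sum_congr rfl fun r _ => Finset.sum_congr rfl fun c _ => ?_
          rw [hent r c, Finset.mul_sum]
          exact Finset.sum_congr rfl fun α _ => by ring
      _ = ∑ α, ∑ i, 2 * (∑ j, adjugate ((1 : Matrix (Fin n) (Fin n) ℝ) + (F p)ᵀ * F p) i j * F p α j)
            * pd v (fun q => F q α i) p :=
          jacobi_regroup _ (hadj_symm p) (F p) (fun α i => pd v (fun q => F q α i) p)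
      _ = ∑ α, ∑ i, 2 * xi' p α i * pd v (fun q => F q α i) p := by
          refine Finset.sum_congr rfl fun α _ => Finset.sum_congr rfl fun i _ => ?_
          rw [← hxi2 p α i]
  -- derivative of h
  have pdh : ∀ v : ℝ × (Fin n → ℝ), pd v h p
      = ((∑ α, (D p α + ∑ j, F p α j * P p j) * pd v (fun q => D q α) p)
        + ∑ α, ∑ i, (D p α * P p i + xi' p α i) * pd v (fun q => F q α i) p) / h p := by
    intro v
    have hsp : Real.sqrt ((∑ α, (D p α)^2) + (∑ i, (P p i)^2) + ((1 : Matrix (Fin n) (Fin n) ℝ) + (F p)ᵀ * F p).det)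
        = h p := by rw [hh]
    conv_lhs => rw [hh]
    rw [pd_sqrt (hdg p) (hgpos p) v, hsp]
    have pdg : pd v (fun q => (∑ α, (D q α)^2) + (∑ i, (P q i)^2) + ((1 : Matrix (Fin n) (Fin n) ℝ) + (F q)ᵀ * F q).det) p
        = 2 * ((∑ α, (D p α + ∑ j, F p α j * P p j) * pd v (fun q => D q α) p)
          + ∑ α, ∑ i, (D p α * P p i + xi' p α i) * pd v (fun q => F q α i) p) := by
      rw [pd_add ((DifferentiableAt.fun_sum fun α _ => (hdD p α).fun_pow 2).fun_add
          (DifferentiableAt.fun_sum fun i _ => (hdP p i).fun_pow 2)) (hdXi p) v,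
        pd_add (DifferentiableAt.fun_sum fun α _ => (hdD p α).fun_pow 2)
          (DifferentiableAt.fun_sum fun i _ => (hdP p i).fun_pow 2) v,
        pd_sum (fun α _ => (hdD p α).fun_pow 2) v, pd_sum (fun i _ => (hdP p i).fun_pow 2) v, pdXi v]
      have e1 : ∑ α, pd v (fun q => (D q α)^2) p = ∑ α, 2 * D p α * pd v (fun q => D q α) p :=
        Finset.sum_congr rfl fun α _ => pd_sq (hdD p α) v
      have e2 : ∑ i, pd v (fun q => (P q i)^2) p
          = ∑ i, 2 * P p i * (∑ α, (F p α i * pd v (fun q => D q α) p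
              + D p α * pd v (fun q => F q α i) p)) := by
        refine Finset.sum_congr rfl fun i _ => ?_
        rw [pd_sq (hdP p i) v, pdP v i]
      rw [e1, e2]
      exact regroup (D p) (F p) (P p) (xi' p) (fun α => pd v (fun q => D q α) p)
        (fun α i => pd v (fun q => F q α i) p)
    rw [pdg]
    field_simp
  -- the key pointwise algebraic identity
  have hkey : ∀ (q : ℝ × (Fin n → ℝ)) (i : Fin n),
      ∑ α, ((D q α + ∑ j, F q α j * P q j) * (D q α * P q i + xi' q α i))
      = h q ^ 2 * P q i := by
    intro q i
    have hN : ∀ i' j : Fin n, ∑ k, ((1 : Matrix (Fin n) (Fin n) ℝ) + (F q)ᵀ * F q)⁻¹ i' k *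
        ((if k = j then (1:ℝ) else 0) + ∑ α, F q α k * F q α j) = if i' = j then 1 else 0 := by
      intro i' j
      have h1 : (((1 : Matrix (Fin n) (Fin n) ℝ) + (F q)ᵀ * F q)⁻¹ * ((1 : Matrix (Fin n) (Fin n) ℝ) + (F q)ᵀ * F q)) i' j
          = (1 : Matrix (Fin n) (Fin n) ℝ) i' j := by
        rw [Matrix.nonsing_inv_mul _ (hdet_pos q).ne'.isUnit]
      rw [Matrix.mul_apply] at h1
      calc ∑ k, ((1 : Matrix (Fin n) (Fin n) ℝ) + (F q)ᵀ * F q)⁻¹ i' k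
              * ((if k = j then (1:ℝ) else 0) + ∑ α, F q α k * F q α j)
          = ∑ k, ((1 : Matrix (Fin n) (Fin n) ℝ) + (F q)ᵀ * F q)⁻¹ i' k * ((1 : Matrix (Fin n) (Fin n) ℝ) + (F q)ᵀ * F q) k j :=
            Finset.sum_congr rfl fun k _ => by rw [← hMentry q k j]
        _ = (1 : Matrix (Fin n) (Fin n) ℝ) i' j := h1
        _ = if i' = j then 1 else 0 := Matrix.one_apply
    have hPq : ∀ j : Fin n, P q j = ∑ β, F q β j * D q β := fun j => by rw [hP]
    calc ∑ α, ((D q α + ∑ j, F q α j * P q j) * (D q α * P q i + xi' q α i))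
        = ∑ α, ((D q α + ∑ j, F q α j * P q j) * (D q α * P q i
            + ((1 : Matrix (Fin n) (Fin n) ℝ) + (F q)ᵀ * F q).det * ∑ j, ((1 : Matrix (Fin n) (Fin n) ℝ) + (F q)ᵀ * F q)⁻¹ i j * F q α j)) :=
          Finset.sum_congr rfl fun α _ => by rw [hxi']
      _ = ((∑ α, (D q α)^2) + (∑ j, (P q j)^2) + ((1 : Matrix (Fin n) (Fin n) ℝ) + (F q)ᵀ * F q).det) * P q i :=
          key_alg' (F q) (D q) (P q) hPq _ _ hN i
      _ = h q ^ 2 * P q i := by rw [hsq q]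
  -- the per-direction claim
  have claim : ∀ i : Fin n,
      ∑ α, ((D p α + ∑ j, F p α j * P p j)
          * px i (fun q => (D q α * P q i + xi' q α i) / h q) p
        + (D p α * P p i + xi' p α i)
          * px i (fun q => (D q α + ∑ j, F q α j * P q j) / h q) p)
      = h p * px i (fun q => P q i) p := by
    intro i
    simp only [px_eq_pd]
    set v : ℝ × (Fin n → ℝ) := ((0:ℝ), Pi.single i (1:ℝ)) with hv
    have expand : ∀ α : Fin m, (D p α + ∑ j, F p α j * P p j)
          * pd v (fun q => (D q α * P q i + xi' q α i) / h q) p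
        + (D p α * P p i + xi' p α i)
          * pd v (fun q => (D q α + ∑ j, F q α j * P q j) / h q) p
        = ((D p α + ∑ j, F p α j * P p j) * pd v (fun q => D q α * P q i + xi' q α i) p
          + (D p α * P p i + xi' p α i) * pd v (fun q => D q α + ∑ j, F q α j * P q j) p) / h p
          - 2 * ((D p α + ∑ j, F p α j * P p j) * (D p α * P p i + xi' p α i))
            * pd v h p / (h p)^2 := by
      intro α
      rw [pd_div (hdB p α i) (hdh p) hne v, pd_div (hdA p α) (hdh p) hne v]
      field_simp
      ring
    rw [Finset.sum_congr rfl fun α _ => expand α, Finset.sum_sub_distrib, ← Finset.sum_div]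
    have hsum1 : ∑ α, ((D p α + ∑ j, F p α j * P p j)
          * pd v (fun q => D q α * P q i + xi' q α i) p
        + (D p α * P p i + xi' p α i) * pd v (fun q => D q α + ∑ j, F q α j * P q j) p)
        = pd v (fun q => ∑ α, (D q α + ∑ j, F q α j * P q j)
            * (D q α * P q i + xi' q α i)) p := by
      rw [pd_sum (fun α _ => (hdA p α).fun_mul (hdB p α i)) v]
      refine Finset.sum_congr rfl fun α _ => ?_
      rw [pd_mul (hdA p α) (hdB p α i) v]
    have hsum2 : ∑ α, 2 * ((D p α + ∑ j, F p α j * P p j) * (D p α * P p i + xi' p α i))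
          * pd v h p / (h p)^2
        = 2 * (h p ^ 2 * P p i) * pd v h p / (h p)^2 := by
      rw [← Finset.sum_div, ← Finset.sum_mul, ← Finset.mul_sum, hkey p i]
    have hfun : (fun q => ∑ α, (D q α + ∑ j, F q α j * P q j) * (D q α * P q i + xi' q α i))
        = fun q => h q ^ 2 * P q i := funext fun q => hkey q i
    have hprod : pd v (fun q => h q ^ 2 * P q i) p
        = h p ^ 2 * pd v (fun q => P q i) p + P p i * (2 * h p * pd v h p) := by
      rw [pd_mul ((hdh p).fun_pow 2) (hdP p i) v, pd_sq (hdh p) v]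
    rw [hsum1, hsum2, hfun, hprod]
    field_simp
    ring
  -- equations of motion in pd form
  have eqF' : ∀ (α : Fin m) (i : Fin n), pd ((1:ℝ), (0 : Fin n → ℝ)) (fun q => F q α i) p
      = - px i (fun q => (D q α + ∑ j, F q α j * P q j) / h q) p := by
    intro α i
    have hE := heqF p α i
    rw [pt_eq_pd] at hE
    linarith
  have eqD' : ∀ α : Fin m, pd ((1:ℝ), (0 : Fin n → ℝ)) (fun q => D q α) p
      = - ∑ i, px i (fun q => (D q α * P q i + xi' q α i) / h q) p := by
    intro α
    have hE := heqD p α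
    rw [pt_eq_pd] at hE
    linarith
  -- assemble
  have key1 : h p * pt h p
      = - ∑ i, ∑ α, ((D p α + ∑ j, F p α j * P p j)
          * px i (fun q => (D q α * P q i + xi' q α i) / h q) p
        + (D p α * P p i + xi' p α i)
          * px i (fun q => (D q α + ∑ j, F q α j * P q j) / h q) p) := by
    rw [pt_eq_pd, pdh ((1:ℝ), (0 : Fin n → ℝ))]
    rw [mul_div_cancel₀ _ hne]
    have s1 : ∑ α, (D p α + ∑ j, F p α j * P p j)
          * pd ((1:ℝ), (0 : Fin n → ℝ)) (fun q => D q α) p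
        = - ∑ i, ∑ α, (D p α + ∑ j, F p α j * P p j)
            * px i (fun q => (D q α * P q i + xi' q α i) / h q) p := by
      calc ∑ α, (D p α + ∑ j, F p α j * P p j)
              * pd ((1:ℝ), (0 : Fin n → ℝ)) (fun q => D q α) p
          = ∑ α, - ∑ i, (D p α + ∑ j, F p α j * P p j)
              * px i (fun q => (D q α * P q i + xi' q α i) / h q) p := by
            refine Finset.sum_congr rfl fun α _ => ?_
            rw [eqD' α, mul_neg, Finset.mul_sum]
        _ = - ∑ α, ∑ i, (D p α + ∑ j, F p α j * P p j)
              * px i (fun q => (D q α * P q i + xi' q α i) / h q) p := by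
            rw [Finset.sum_neg_distrib]
        _ = - ∑ i, ∑ α, (D p α + ∑ j, F p α j * P p j)
              * px i (fun q => (D q α * P q i + xi' q α i) / h q) p := by
            rw [Finset.sum_comm]
    have s2 : ∑ α, ∑ i, (D p α * P p i + xi' p α i)
          * pd ((1:ℝ), (0 : Fin n → ℝ)) (fun q => F q α i) p
        = - ∑ i, ∑ α, (D p α * P p i + xi' p α i)
            * px i (fun q => (D q α + ∑ j, F q α j * P q j) / h q) p := by
      calc ∑ α, ∑ i, (D p α * P p i + xi' p α i)
              * pd ((1:ℝ), (0 : Fin n → ℝ)) (fun q => F q α i) p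
          = ∑ α, ∑ i, - ((D p α * P p i + xi' p α i)
              * px i (fun q => (D q α + ∑ j, F q α j * P q j) / h q) p) := by
            refine Finset.sum_congr rfl fun α _ => Finset.sum_congr rfl fun i _ => ?_
            rw [eqF' α i, mul_neg]
        _ = - ∑ α, ∑ i, (D p α * P p i + xi' p α i)
              * px i (fun q => (D q α + ∑ j, F q α j * P q j) / h q) p := by
            simp only [Finset.sum_neg_distrib]
        _ = - ∑ i, ∑ α, (D p α * P p i + xi' p α i)
              * px i (fun q => (D q α + ∑ j, F q α j * P q j) / h q) p := by
            rw [Finset.sum_comm]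
    rw [s1, s2, ← neg_add, ← Finset.sum_add_distrib]
    congr 1
    refine Finset.sum_congr rfl fun i _ => ?_
    rw [← Finset.sum_add_distrib]
  have final : h p * (pt h p + ∑ i, px i (fun q => P q i) p) = 0 := by
    rw [mul_add, key1, Finset.sum_congr rfl fun i _ => claim i, Finset.mul_sum]
    ring
  rcases mul_eq_zero.mp final with hc | hc
  · exact absurd hc hne
  · exact hc
end

section
/- Fix m ≥ 1 and real numbers h ≠ 0, P ∈ ℝ, D, F ∈ ℝᵐ, and let U = (h,P,D,F) ∈ ℝ^{2+2m}. Define the (2+2m)×(2+2m) block matrix A(U) = (1/h)·[[0, h, 0, 0], [(1−P²)/h, 2P, 0, 0], [−(PD+F)/h, D, P·I_m, I_m], [−(D+PF)/h, F, I_m, P·I_m]] (rows/columns blocked as 1+1+m+m). Set λ_± = (P±1)/h. Then: (a) the vectors v_±⁰ = (h, P±1, D, F) and v_±^i = (0, 0, e_i, ±e_i) for i = 1,…,m (where e_i is the i-th standard basis vector of ℝᵐ) satisfy A(U) v_±^k = λ_± v_±^k for k = 0,1,…,m, so λ_+ and λ_− are eigenvalues of A(U), each with at least m+1 linearly independent eigenvectors;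 (b) the gradients of λ_± with respect to U = (h,P,D,F), namely ∇λ_± = (−(P±1)/h², 1/h, 0, 0), satisfy ∇λ_±(U)·v_±^k(U) = 0 for every k = 0,1,…,m, i.e. both characteristic fields are linearly degenerate. -/
lemma string_aux_li {m : ℕ} (h p : ℝ) (hh : h ≠ 0) (D F : Fin m → ℝ)
    (w : Fin m → Fin m → ℝ) :
    LinearIndependent ℝ (fun k : Option (Fin m) =>
      (k.elim (h, p, D, F) (fun i => ((0:ℝ), (0:ℝ), Pi.single i 1, w i)) :
        ℝ × ℝ × (Fin m → ℝ) × (Fin m → ℝ))) := by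
  rw [Fintype.linearIndependent_iff]
  intro g hg
  rw [Fintype.sum_option] at hg
  have h0 : g none = 0 := by
    have h1 := congrArg Prod.fst hg
    simp [Prod.fst_sum, hh] at h1
    exact h1
  intro k
  cases k with
  | none => exact h0
  | some i =>
    have h1 := congrFun (congrArg (fun x => x.2.2.1) hg) i
    simp [Prod.snd_sum, Prod.fst_sum, Finset.sum_apply, Pi.single_apply, h0] at h1
    exact h1

/-- The `n = 1` augmented system for a relativistic string: the coefficient matrix `A(U)`
has the two propagation speeds `λ_± = (P±1)/h`, each with `m+1` linearly independent
eigenvectors, and both characteristic fields are linearly degenerate. -/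
theorem string_system_linearly_degenerate (m : ℕ) (hm : 1 ≤ m)
    (h P : ℝ) (hh : h ≠ 0) (D F : Fin m → ℝ)
    (Aop : ℝ × ℝ × (Fin m → ℝ) × (Fin m → ℝ) → ℝ × ℝ × (Fin m → ℝ) × (Fin m → ℝ))
    (hAop : Aop = fun u => (1 / h) • (
        h * u.2.1,
        (1 - P ^ 2) / h * u.1 + 2 * P * u.2.1,
        (fun α => -((P * D α + F α) / h) * u.1 + D α * u.2.1 + P * u.2.2.1 α + u.2.2.2 α),
        (fun α => -((D α + P * F α) / h) * u.1 + F α * u.2.1 + u.2.2.1 α + P * u.2.2.2 α)))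
    (vp vm : Option (Fin m) → ℝ × ℝ × (Fin m → ℝ) × (Fin m → ℝ))
    (hvp : vp = fun k => k.elim (h, P + 1, D, F)
      (fun i => (0, 0, Pi.single i 1, Pi.single i 1)))
    (hvm : vm = fun k => k.elim (h, P - 1, D, F)
      (fun i => (0, 0, Pi.single i 1, -Pi.single i 1))) :
    (∀ k, Aop (vp k) = ((P + 1) / h) • vp k) ∧
    (∀ k, Aop (vm k) = ((P - 1) / h) • vm k) ∧
    LinearIndependent ℝ vp ∧
    LinearIndependent ℝ vm ∧
    (∀ k, (-(P + 1) / h ^ 2) * (vp k).1 + (1 / h) * (vp k).2.1 = 0) ∧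
    (∀ k, (-(P - 1) / h ^ 2) * (vm k).1 + (1 / h) * (vm k).2.1 = 0) := by
  subst hAop hvp hvm
  refine ⟨?_, ?_, ?_, ?_, ?_, ?_⟩
  · rintro (_ | i) <;>
      · refine Prod.ext ?_ (Prod.ext ?_ (Prod.ext (funext fun α => ?_) (funext fun α => ?_))) <;>
          simp [Prod.smul_def, smul_eq_mul] <;> field_simp <;> ring
  · rintro (_ | i) <;>
      · refine Prod.ext ?_ (Prod.ext ?_ (Prod.ext (funext fun α => ?_) (funext fun α => ?_))) <;>
          simp [Prod.smul_def, smul_eq_mul] <;> field_simp <;> ring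
  · exact string_aux_li h (P + 1) hh D F (fun i => Pi.single i 1)
  · exact string_aux_li h (P - 1) hh D F (fun i => -Pi.single i 1)
  · rintro (_ | i) <;> simp <;> field_simp <;> ring
  · rintro (_ | i) <;> simp <;> field_simp <;> ring
end

section
/- Let h > 0, D = (D_α)_{α=1,…,m}, P = (P_i)_{i=1,…,n}, and M_{A,I} (for A ⊆ {1,…,m}, I ⊆ {1,…,n}, 1 ≤ |A| = |I| ≤ min{m,n}) be smooth functions on an open subset of ℝ×ℝⁿ solving the augmented system (sn1)–(sn5): (sn1) ∂_t h + ∂_iP_i = 0; (sn2) ∂_t D_α + ∂_i(D_αP_i/h) + Σ_{A,I,i: α∈A, i∈I}(−1)^{O_A(α)+O_I(i)} ∂_i(M_{A,I}M_{A∖{α},I∖{i}}/h) = 0; (sn3) ∂_t P_i + Σ_{A,I,j: j∈I, i∉I∖{j}}(−1)^{O_I(j)+O_{I∖{j}}(i)} ∂_j(M_{A,(I∖{j})∪{i}}M_{A,I}/h) + ∂_j(P_iP_j/h) − ∂_i((1+Σ_{A,I}M_{A,I}²)/h) = 0; (sn4) ∂_t M_{A,I} + Σ_{i,j: i∈I,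 j∉I∖{i}}(−1)^{O_{I∖{i}}(j)+O_I(i)} ∂_i(M_{A,(I∖{i})∪{j}}P_j/h) + Σ_{α,i: α∈A, i∈I}(−1)^{O_A(α)+O_I(i)} ∂_i(M_{A∖{α},I∖{i}}D_α/h) = 0; (sn5) Σ_{i∈I}(−1)^{O_I(i)} ∂_i M_{A',I∖{i}} = 0 for 2 ≤ |I| = |A'|+1 ≤ min{m,n}+1. Then the rescaled variables τ = 1/h, d_α = D_α/h, v_i = P_i/h, m_{A,I} = M_{A,I}/h (with convention m_{∅,∅} = τ) solve the symmetric non-conservative system: ∂_t τ + v_j∂_jτ − τ∂_jv_j = 0; ∂_t d_α + v_i∂_i d_α + Σ_{A,I,i: α∈A, i∈I}(−1)^{O_A(α)+O_I(i)} m_{A∖{α},I∖{i}} ∂_i m_{A,I} = 0; ∂_t v_i + Σ_{A,I,j: j∈I, i∉I∖{j}}(−1)^{O_I(j)+O_{I∖{j}}(i)} m_{A,(I∖{j})∪{i}} ∂_j m_{A,I} − Σ_{A,I} m_{A,I}∂_i m_{A,I} + v_j∂_jv_i − τ∂_iτ = 0; ∂_t m_{A,I} + v_j∂_j m_{A,I}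 + Σ_{i,j: i∈I, j∉I∖{i}}(−1)^{O_{I∖{i}}(j)+O_I(i)} m_{A,(I∖{i})∪{j}} ∂_i v_j − m_{A,I}∂_jv_j + Σ_{α,i: α∈A, i∈I}(−1)^{O_A(α)+O_I(i)} m_{A∖{α},I∖{i}} ∂_i d_α = 0. -/
/-- `O_A(a)`: the number of elements of `A ∪ {a}` that are `≤ a`. -/
def ordIdx {N : ℕ} (A : Finset (Fin N)) (a : Fin N) : ℕ :=
  ((insert a A).filter (fun x => x ≤ a)).card

section Helpers

variable {n : ℕ} {f g h : ℝ × (Fin n → ℝ) → ℝ} {p w : ℝ × (Fin n → ℝ)}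

lemma fd_mul (hf : DifferentiableAt ℝ f p) (hg : DifferentiableAt ℝ g p) :
    fderiv ℝ (fun q => f q * g q) p w = fderiv ℝ f p w * g p + f p * fderiv ℝ g p w := by
  rw [fderiv_fun_mul hf hg]
  simp only [ContinuousLinearMap.add_apply, ContinuousLinearMap.coe_smul', Pi.smul_apply,
    smul_eq_mul]
  ring

lemma fd_inv (hh : DifferentiableAt ℝ h p) (h0 : h p ≠ 0) :
    fderiv ℝ (fun q => (h q)⁻¹) p w = -(fderiv ℝ h p w) / h p ^ 2 := by
  have hc : HasFDerivAt (fun q => (h q)⁻¹)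
      ((ContinuousLinearMap.smulRight (1 : ℝ →L[ℝ] ℝ) (-(h p ^ 2)⁻¹)).comp (fderiv ℝ h p)) p :=
    (hasFDerivAt_inv h0).comp p hh.hasFDerivAt
  rw [hc.fderiv]
  simp only [ContinuousLinearMap.coe_comp', Function.comp_apply,
    ContinuousLinearMap.smulRight_apply, ContinuousLinearMap.one_apply, smul_eq_mul]
  field_simp

lemma fd_div (hf : DifferentiableAt ℝ f p) (hh : DifferentiableAt ℝ h p) (h0 : h p ≠ 0) :
    fderiv ℝ (fun q => f q / h q) p w
      = (fderiv ℝ f p w * h p - f p * fderiv ℝ h p w) / h p ^ 2 := by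
  have he : (fun q => f q / h q) = fun q => f q * (h q)⁻¹ := funext fun q => div_eq_mul_inv _ _
  rw [he, fd_mul (g := fun q => (h q)⁻¹) hf (hh.inv h0), fd_inv hh h0]
  field_simp
  ring

lemma fd_one_div (hh : DifferentiableAt ℝ h p) (h0 : h p ≠ 0) :
    fderiv ℝ (fun q => 1 / h q) p w = -(fderiv ℝ h p w) / h p ^ 2 := by
  have he : (fun q => 1 / h q) = fun q => (h q)⁻¹ := funext fun q => one_div _
  rw [he, fd_inv hh h0]

lemma fd_mul_div (hf : DifferentiableAt ℝ f p) (hg : DifferentiableAt ℝ g p)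
    (hh : DifferentiableAt ℝ h p) (h0 : h p ≠ 0) :
    fderiv ℝ (fun q => f q * g q / h q) p w
      = ((fderiv ℝ f p w * g p + f p * fderiv ℝ g p w) * h p
          - f p * g p * fderiv ℝ h p w) / h p ^ 2 := by
  rw [fd_div (f := fun q => f q * g q) (hf.mul hg) hh h0, fd_mul hf hg]

lemma fd_div' (hf : DifferentiableAt ℝ f p) (hh : DifferentiableAt ℝ h p) (h0 : h p ≠ 0) :
    fderiv ℝ (fun q => f q / h q) p w
      = fderiv ℝ f p w / h p - f p * fderiv ℝ h p w / h p ^ 2 := by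
  rw [fd_div hf hh h0]
  field_simp

lemma fd_mul_div' (hf : DifferentiableAt ℝ f p) (hg : DifferentiableAt ℝ g p)
    (hh : DifferentiableAt ℝ h p) (h0 : h p ≠ 0) :
    fderiv ℝ (fun q => f q * g q / h q) p w
      = fderiv ℝ f p w * g p / h p + f p * fderiv ℝ g p w / h p
        - f p * g p * fderiv ℝ h p w / h p ^ 2 := by
  rw [fd_mul_div hf hg hh h0]
  field_simp

lemma pt_div (hf : DifferentiableAt ℝ f p) (hh : DifferentiableAt ℝ h p) (h0 : h p ≠ 0) :
    pt (fun q => f q / h q) p = pt f p / h p - f p * pt h p / h p ^ 2 :=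
  fd_div' hf hh h0

lemma px_div (i : Fin n) (hf : DifferentiableAt ℝ f p) (hh : DifferentiableAt ℝ h p)
    (h0 : h p ≠ 0) :
    px i (fun q => f q / h q) p = px i f p / h p - f p * px i h p / h p ^ 2 :=
  fd_div' hf hh h0

lemma pt_one_div (hh : DifferentiableAt ℝ h p) (h0 : h p ≠ 0) :
    pt (fun q => 1 / h q) p = -(pt h p) / h p ^ 2 :=
  fd_one_div hh h0

lemma px_one_div (i : Fin n) (hh : DifferentiableAt ℝ h p) (h0 : h p ≠ 0) :
    px i (fun q => 1 / h q) p = -(px i h p) / h p ^ 2 :=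
  fd_one_div hh h0

lemma pt_mul_div (hf : DifferentiableAt ℝ f p) (hg : DifferentiableAt ℝ g p)
    (hh : DifferentiableAt ℝ h p) (h0 : h p ≠ 0) :
    pt (fun q => f q * g q / h q) p
      = pt f p * g p / h p + f p * pt g p / h p - f p * g p * pt h p / h p ^ 2 :=
  fd_mul_div' hf hg hh h0

lemma px_mul_div (i : Fin n) (hf : DifferentiableAt ℝ f p) (hg : DifferentiableAt ℝ g p)
    (hh : DifferentiableAt ℝ h p) (h0 : h p ≠ 0) :
    px i (fun q => f q * g q / h q) p
      = px i f p * g p / h p + f p * px i g p / h p - f p * g p * px i h p / h p ^ 2 :=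
  fd_mul_div' hf hg hh h0

end Helpers

section Comb

lemma ordIdx_erase_self {N : ℕ} {I : Finset (Fin N)} {j : Fin N} (hj : j ∈ I) :
    ordIdx (I.erase j) j = ordIdx I j := by
  unfold ordIdx
  rw [Finset.insert_erase hj, Finset.insert_eq_self.mpr hj]

lemma ordIdx_sign {N : ℕ} {I : Finset (Fin N)} {i j : Fin N} (hi : i ∉ I) (hj : j ∈ I) :
    ordIdx (insert i I) j + ordIdx (insert i I) i = ordIdx I j + ordIdx (I.erase j) i + 1 := by
  classical
  have hij : i ≠ j := fun e => hi (e ▸ hj)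
  have hiJ : i ∈ insert i I := Finset.mem_insert_self _ _
  have hjJ : j ∈ insert i I := Finset.mem_insert_of_mem hj
  have h1 : ordIdx (insert i I) i = ((insert i I).filter (fun x => x ≤ i)).card := by
    unfold ordIdx; rw [Finset.insert_eq_self.mpr hiJ]
  have h2 : ordIdx (insert i I) j = ((insert i I).filter (fun x => x ≤ j)).card := by
    unfold ordIdx; rw [Finset.insert_eq_self.mpr hjJ]
  have h3 : ordIdx I j = (((insert i I).filter (fun x => x ≤ j)).erase i).card := by
    unfold ordIdx
    rw [Finset.insert_eq_self.mpr hj, ← Finset.filter_erase, Finset.erase_insert hi]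
  have h4 : ordIdx (I.erase j) i = (((insert i I).filter (fun x => x ≤ i)).erase j).card := by
    unfold ordIdx
    rw [← Finset.erase_insert_of_ne hij, Finset.filter_erase]
  rcases lt_or_gt_of_ne hij with hlt | hgt
  · have hiF : i ∈ (insert i I).filter (fun x => x ≤ j) :=
      Finset.mem_filter.mpr ⟨hiJ, le_of_lt hlt⟩
    have hjF : j ∉ (insert i I).filter (fun x => x ≤ i) := fun hmem =>
      absurd (Finset.mem_filter.mp hmem).2 (not_le.mpr hlt)
    have hpos : 1 ≤ ((insert i I).filter (fun x => x ≤ j)).card :=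
      Finset.card_pos.mpr ⟨i, hiF⟩
    rw [h1, h2, h3, h4, Finset.card_erase_of_mem hiF, Finset.erase_eq_of_notMem hjF]
    omega
  · have hjF : j ∈ (insert i I).filter (fun x => x ≤ i) :=
      Finset.mem_filter.mpr ⟨hjJ, le_of_lt hgt⟩
    have hiF : i ∉ (insert i I).filter (fun x => x ≤ j) := fun hmem =>
      absurd (Finset.mem_filter.mp hmem).2 (not_le.mpr hgt)
    have hpos : 1 ≤ ((insert i I).filter (fun x => x ≤ i)).card :=
      Finset.card_pos.mpr ⟨j, hjF⟩
    rw [h1, h2, h3, h4, Finset.card_erase_of_mem hjF, Finset.erase_eq_of_notMem hiF]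
    omega

end Comb


/-- A smooth solution of the augmented system (sn1)-(sn5) yields, in the rescaled
variables `τ = 1/h`, `d = D/h`, `v = P/h`, `m_{A,I} = M_{A,I}/h` (with `m_{∅,∅} = τ`),
a solution of the symmetric non-conservative system. -/
theorem nonconservative_form (m n : ℕ)
    (Ω : Set (ℝ × (Fin n → ℝ))) (hΩ : IsOpen Ω)
    (h : ℝ × (Fin n → ℝ) → ℝ)
    (D : Fin m → ℝ × (Fin n → ℝ) → ℝ)
    (P : Fin n → ℝ × (Fin n → ℝ) → ℝ)
    (M : Finset (Fin m) → Finset (Fin n) → ℝ × (Fin n → ℝ) → ℝ)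
    (hsmh : ContDiffOn ℝ (⊤ : ℕ∞) h Ω)
    (hsmD : ∀ α, ContDiffOn ℝ (⊤ : ℕ∞) (D α) Ω)
    (hsmP : ∀ i, ContDiffOn ℝ (⊤ : ℕ∞) (P i) Ω)
    (hsmM : ∀ A I, ContDiffOn ℝ (⊤ : ℕ∞) (M A I) Ω)
    (hpos : ∀ p ∈ Ω, 0 < h p)
    (hMempty : ∀ p, M ∅ ∅ p = 1)
    (sn1 : ∀ p ∈ Ω, pt h p + ∑ i, px i (P i) p = 0)
    (sn2 : ∀ p ∈ Ω, ∀ α,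
      pt (D α) p + ∑ i, px i (fun q => D α q * P i q / h q) p +
      (∑ A : Finset (Fin m), ∑ I : Finset (Fin n), ∑ i,
        if A.card = I.card ∧ α ∈ A ∧ i ∈ I then
          (-1 : ℝ) ^ (ordIdx A α + ordIdx I i) *
            px i (fun q => M A I q * M (A.erase α) (I.erase i) q / h q) p
        else 0) = 0)
    (sn3 : ∀ p ∈ Ω, ∀ i,
      pt (P i) p +
      (∑ A : Finset (Fin m), ∑ I : Finset (Fin n), ∑ j,
        if A.card = I.card ∧ j ∈ I ∧ i ∉ I.erase j then
          (-1 : ℝ) ^ (ordIdx I j + ordIdx (I.erase j) i) *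
            px j (fun q => M A (insert i (I.erase j)) q * M A I q / h q) p
        else 0) +
      (∑ j, px j (fun q => P i q * P j q / h q) p) -
      px i (fun q => (1 + ∑ A : Finset (Fin m), ∑ I : Finset (Fin n),
        if A.card = I.card ∧ 1 ≤ A.card then (M A I q) ^ 2 else 0) / h q) p = 0)
    (sn4 : ∀ p ∈ Ω, ∀ (A : Finset (Fin m)) (I : Finset (Fin n)),
      A.card = I.card → 1 ≤ A.card →
      pt (M A I) p +
      (∑ i, ∑ j, if i ∈ I ∧ j ∉ I.erase i then
          (-1 : ℝ) ^ (ordIdx (I.erase i) j + ordIdx I i) *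
            px i (fun q => M A (insert j (I.erase i)) q * P j q / h q) p
        else 0) +
      (∑ α, ∑ i, if α ∈ A ∧ i ∈ I then
          (-1 : ℝ) ^ (ordIdx A α + ordIdx I i) *
            px i (fun q => M (A.erase α) (I.erase i) q * D α q / h q) p
        else 0) = 0)
    (sn5 : ∀ p ∈ Ω, ∀ (A' : Finset (Fin m)) (I : Finset (Fin n)),
      I.card = A'.card + 1 → 2 ≤ I.card →
      ∑ i ∈ I, (-1 : ℝ) ^ (ordIdx I i) * px i (M A' (I.erase i)) p = 0)
    (τ : ℝ × (Fin n → ℝ) → ℝ) (hτ : τ = fun q => 1 / h q)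
    (d : Fin m → ℝ × (Fin n → ℝ) → ℝ) (hd : ∀ α, d α = fun q => D α q / h q)
    (v : Fin n → ℝ × (Fin n → ℝ) → ℝ) (hv : ∀ i, v i = fun q => P i q / h q)
    (mf : Finset (Fin m) → Finset (Fin n) → ℝ × (Fin n → ℝ) → ℝ)
    (hmf : ∀ A I, mf A I = fun q => M A I q / h q) :
    ∀ p ∈ Ω,
      (pt τ p + ∑ j, v j p * px j τ p - τ p * ∑ j, px j (v j) p = 0) ∧
      (∀ α, pt (d α) p + ∑ i, v i p * px i (d α) p +
        (∑ A : Finset (Fin m), ∑ I : Finset (Fin n), ∑ i,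
          if A.card = I.card ∧ α ∈ A ∧ i ∈ I then
            (-1 : ℝ) ^ (ordIdx A α + ordIdx I i) *
              mf (A.erase α) (I.erase i) p * px i (mf A I) p
          else 0) = 0) ∧
      (∀ i, pt (v i) p +
        (∑ A : Finset (Fin m), ∑ I : Finset (Fin n), ∑ j,
          if A.card = I.card ∧ j ∈ I ∧ i ∉ I.erase j then
            (-1 : ℝ) ^ (ordIdx I j + ordIdx (I.erase j) i) *
              mf A (insert i (I.erase j)) p * px j (mf A I) p
          else 0) -
        (∑ A : Finset (Fin m), ∑ I : Finset (Fin n),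
          if A.card = I.card ∧ 1 ≤ A.card then mf A I p * px i (mf A I) p else 0) +
        ∑ j, v j p * px j (v i) p - τ p * px i τ p = 0) ∧
      (∀ (A : Finset (Fin m)) (I : Finset (Fin n)), A.card = I.card → 1 ≤ A.card →
        pt (mf A I) p + ∑ j, v j p * px j (mf A I) p +
        (∑ i, ∑ j, if i ∈ I ∧ j ∉ I.erase i then
            (-1 : ℝ) ^ (ordIdx (I.erase i) j + ordIdx I i) *
              mf A (insert j (I.erase i)) p * px i (v j) p
          else 0) -
        mf A I p * ∑ j, px j (v j) p +
        (∑ α, ∑ i, if α ∈ A ∧ i ∈ I then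
            (-1 : ℝ) ^ (ordIdx A α + ordIdx I i) *
              mf (A.erase α) (I.erase i) p * px i (d α) p
          else 0) = 0) := by
  intro p hp
  classical
  have h0 : h p ≠ 0 := ne_of_gt (hpos p hp)
  have hmem : Ω ∈ nhds p := hΩ.mem_nhds hp
  have dh : DifferentiableAt ℝ h p := (hsmh.contDiffAt hmem).differentiableAt (by simp)
  have dD : ∀ α, DifferentiableAt ℝ (D α) p := fun α =>
    ((hsmD α).contDiffAt hmem).differentiableAt (by simp)
  have dP : ∀ i, DifferentiableAt ℝ (P i) p := fun i =>
    ((hsmP i).contDiffAt hmem).differentiableAt (by simp)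
  have dM : ∀ A I, DifferentiableAt ℝ (M A I) p := fun A I =>
    ((hsmM A I).contDiffAt hmem).differentiableAt (by simp)
  have hM00 : M ∅ ∅ = fun _ => (1 : ℝ) := funext hMempty
  have pxM00 : ∀ i : Fin n, px i (M ∅ ∅) p = 0 := by
    intro i
    rw [hM00]
    simp [px]
  have key1 : ∀ (A : Finset (Fin m)) (I : Finset (Fin n)) (α : Fin m), α ∈ A → A.card = I.card →
      (∑ i ∈ I, (-1 : ℝ) ^ (ordIdx I i) * px i (M (A.erase α) (I.erase i)) p) = 0 := by
    intro A I α hα hAI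
    by_cases h2 : 2 ≤ I.card
    · exact sn5 p hp (A.erase α) I (by rw [Finset.card_erase_of_mem hα]; omega) h2
    · have hA1 : 1 ≤ A.card := Finset.card_pos.mpr ⟨α, hα⟩
      apply Finset.sum_eq_zero
      intro i hi
      have hIe : I.erase i = ∅ := Finset.card_eq_zero.mp (by
        rw [Finset.card_erase_of_mem hi]; omega)
      have hAe : A.erase α = ∅ := Finset.card_eq_zero.mp (by
        rw [Finset.card_erase_of_mem hα]; omega)
      rw [hIe, hAe, pxM00 i, mul_zero]
  have key2 : ∀ (A : Finset (Fin m)) (I : Finset (Fin n)) (i : Fin n), i ∉ I → A.card = I.card →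
      (∑ j ∈ I, (-1 : ℝ) ^ (ordIdx I j + ordIdx (I.erase j) i)
          * px j (M A (insert i (I.erase j))) p)
        = px i (M A I) p := by
    intro A I i hi hAI
    rcases Finset.eq_empty_or_nonempty I with rfl | hne
    · have hA : A = ∅ := Finset.card_eq_zero.mp (by simpa using hAI)
      subst hA
      simp [pxM00 i]
    · have h5 := sn5 p hp A (insert i I)
        (by rw [Finset.card_insert_of_notMem hi]; omega)
        (by rw [Finset.card_insert_of_notMem hi]
            have := Finset.card_pos.mpr hne; omega)
      rw [Finset.sum_insert hi, Finset.erase_insert hi] at h5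
      have hstep : ∀ j ∈ I,
          (-1 : ℝ) ^ (ordIdx I j + ordIdx (I.erase j) i) * px j (M A (insert i (I.erase j))) p
            = (-(-1 : ℝ) ^ (ordIdx (insert i I) i)) *
                ((-1 : ℝ) ^ (ordIdx (insert i I) j) * px j (M A ((insert i I).erase j)) p) := by
        intro j hj
        have hji : i ≠ j := fun e => hi (e ▸ hj)
        rw [Finset.erase_insert_of_ne hji]
        have hsgn := ordIdx_sign hi hj
        have h2 : (-1 : ℝ) ^ (ordIdx (insert i I) j) * (-1 : ℝ) ^ (ordIdx (insert i I) i)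
            = ((-1 : ℝ) ^ (ordIdx I j + ordIdx (I.erase j) i)) * (-1) := by
          rw [← pow_add, hsgn, pow_succ]
        linear_combination (px j (M A (insert i (I.erase j))) p) * h2
      rw [Finset.sum_congr rfl hstep, ← Finset.mul_sum]
      have hpow : (-1 : ℝ) ^ (ordIdx (insert i I) i) * (-1 : ℝ) ^ (ordIdx (insert i I) i)
          = 1 := by
        rw [← pow_add]; exact Even.neg_one_pow ⟨_, rfl⟩
      linear_combination (-(-1 : ℝ) ^ (ordIdx (insert i I) i)) * h5
        + px i (M A I) p * hpow
  refine ⟨?_, ?_, ?_, ?_⟩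
  · -- equation for τ
    simp only [hτ, hv]
    have s1 := sn1 p hp
    have e0 : pt (fun q => 1 / h q) p = -(pt h p) / h p ^ 2 := pt_one_div dh h0
    have e1b : (∑ j, P j p / h p * px j (fun q => 1 / h q) p)
        = -((∑ j, P j p * px j h p) / h p ^ 3) := by
      calc (∑ j, P j p / h p * px j (fun q => 1 / h q) p)
          = ∑ j, -(P j p * px j h p / h p ^ 3) := Finset.sum_congr rfl fun j _ => by
            rw [px_one_div j dh h0]; all_goals ring
        _ = -((∑ j, P j p * px j h p) / h p ^ 3) := by
            rw [Finset.sum_neg_distrib, ← Finset.sum_div]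
    have e1c : (∑ j, px j (fun q => P j q / h q) p)
        = (∑ j, px j (P j) p) / h p - (∑ j, P j p * px j h p) / h p ^ 2 := by
      calc (∑ j, px j (fun q => P j q / h q) p)
          = ∑ j, (px j (P j) p / h p - P j p * px j h p / h p ^ 2) :=
            Finset.sum_congr rfl fun j _ => by
              rw [px_div j (dP j) dh h0]; all_goals ring
        _ = _ := by rw [Finset.sum_sub_distrib, ← Finset.sum_div, ← Finset.sum_div]
    linear_combination e0 + e1b - (1 / h p) * e1c - (1 / h p ^ 2) * s1
  · -- equation for d
    intro α
    simp only [hd, hv, hmf]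
    have s1 := sn1 p hp
    have s2 := sn2 p hp α
    have e0 : pt (fun q => D α q / h q) p
        = pt (D α) p / h p - D α p * pt h p / h p ^ 2 := pt_div (dD α) dh h0
    have e1 : (∑ i, P i p / h p * px i (fun q => D α q / h q) p)
        = (∑ i, px i (fun q => D α q * P i q / h q) p) / h p
          - D α p * (∑ i, px i (P i) p) / h p ^ 2 := by
      calc (∑ i, P i p / h p * px i (fun q => D α q / h q) p)
          = ∑ i, (px i (fun q => D α q * P i q / h q) p / h p
              - D α p * px i (P i) p / h p ^ 2) := Finset.sum_congr rfl fun i _ => by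
            rw [px_div i (dD α) dh h0, px_mul_div i (dD α) (dP i) dh h0]
            all_goals ring
        _ = _ := by
            rw [Finset.sum_sub_distrib, ← Finset.sum_div, ← Finset.sum_div, ← Finset.mul_sum,
              Finset.sum_div]
    have e2 : (∑ A : Finset (Fin m), ∑ I : Finset (Fin n), ∑ i,
          if A.card = I.card ∧ α ∈ A ∧ i ∈ I then
            (-1 : ℝ) ^ (ordIdx A α + ordIdx I i) * (M (A.erase α) (I.erase i) p / h p)
              * px i (fun q => M A I q / h q) p
          else 0)
        = (∑ A : Finset (Fin m), ∑ I : Finset (Fin n), ∑ i,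
            if A.card = I.card ∧ α ∈ A ∧ i ∈ I then
              (-1 : ℝ) ^ (ordIdx A α + ordIdx I i) *
                px i (fun q => M A I q * M (A.erase α) (I.erase i) q / h q) p
            else 0) / h p
          - (∑ A : Finset (Fin m), ∑ I : Finset (Fin n), ∑ i,
            if A.card = I.card ∧ α ∈ A ∧ i ∈ I then
              (-1 : ℝ) ^ (ordIdx A α + ordIdx I i) * M A I p
                * px i (M (A.erase α) (I.erase i)) p
            else 0) / h p ^ 2 := by
      calc (∑ A : Finset (Fin m), ∑ I : Finset (Fin n), ∑ i,
            if A.card = I.card ∧ α ∈ A ∧ i ∈ I then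
              (-1 : ℝ) ^ (ordIdx A α + ordIdx I i) * (M (A.erase α) (I.erase i) p / h p)
                * px i (fun q => M A I q / h q) p
            else 0)
          = ∑ A : Finset (Fin m), ∑ I : Finset (Fin n), ∑ i,
              ((if A.card = I.card ∧ α ∈ A ∧ i ∈ I then
                (-1 : ℝ) ^ (ordIdx A α + ordIdx I i) *
                  px i (fun q => M A I q * M (A.erase α) (I.erase i) q / h q) p
              else 0) / h p
              - (if A.card = I.card ∧ α ∈ A ∧ i ∈ I then
                (-1 : ℝ) ^ (ordIdx A α + ordIdx I i) * M A I p
                  * px i (M (A.erase α) (I.erase i)) p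
              else 0) / h p ^ 2) :=
            Finset.sum_congr rfl fun A _ => Finset.sum_congr rfl fun I _ =>
              Finset.sum_congr rfl fun i _ => by
                by_cases hc : A.card = I.card ∧ α ∈ A ∧ i ∈ I
                · simp only [if_pos hc]
                  rw [px_div i (dM A I) dh h0,
                    px_mul_div i (dM A I) (dM (A.erase α) (I.erase i)) dh h0]
                  all_goals ring
                · simp only [if_neg hc]
                  norm_num
        _ = _ := by
            simp only [Finset.sum_sub_distrib, ← Finset.sum_div]
    have eR : (∑ A : Finset (Fin m), ∑ I : Finset (Fin n), ∑ i,
          if A.card = I.card ∧ α ∈ A ∧ i ∈ I then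
            (-1 : ℝ) ^ (ordIdx A α + ordIdx I i) * M A I p
              * px i (M (A.erase α) (I.erase i)) p
          else 0) = 0 := by
      apply Finset.sum_eq_zero
      intro A _
      apply Finset.sum_eq_zero
      intro I _
      by_cases hc : A.card = I.card ∧ α ∈ A
      · calc (∑ i, if A.card = I.card ∧ α ∈ A ∧ i ∈ I then
              (-1 : ℝ) ^ (ordIdx A α + ordIdx I i) * M A I p
                * px i (M (A.erase α) (I.erase i)) p
            else 0)
            = ∑ i, (if i ∈ I then
                ((-1 : ℝ) ^ (ordIdx A α) * M A I p) *
                  ((-1 : ℝ) ^ (ordIdx I i) * px i (M (A.erase α) (I.erase i)) p)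
              else 0) := Finset.sum_congr rfl fun i _ => by
              by_cases hiI : i ∈ I
              · rw [if_pos ⟨hc.1, hc.2, hiI⟩, if_pos hiI, pow_add]
                ring
              · rw [if_neg (by tauto), if_neg hiI]
          _ = ∑ i ∈ I, ((-1 : ℝ) ^ (ordIdx A α) * M A I p) *
                ((-1 : ℝ) ^ (ordIdx I i) * px i (M (A.erase α) (I.erase i)) p) := by
              rw [Finset.sum_ite_mem, Finset.univ_inter]
          _ = ((-1 : ℝ) ^ (ordIdx A α) * M A I p) *
                ∑ i ∈ I, (-1 : ℝ) ^ (ordIdx I i) * px i (M (A.erase α) (I.erase i)) p := by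
              rw [Finset.mul_sum]
          _ = 0 := by rw [key1 A I α hc.2 hc.1, mul_zero]
      · apply Finset.sum_eq_zero
        intro i _
        rw [if_neg (by tauto)]
    linear_combination e0 + e1 + e2 + (1 / h p) * s2 - (D α p / h p ^ 2) * s1
      - (1 / h p ^ 2) * eR
  · -- equation for v
    intro i
    simp only [hv, hτ, hmf]
    have s1 := sn1 p hp
    have s3 := sn3 p hp i
    have f0 : pt (fun q => P i q / h q) p
        = pt (P i) p / h p - P i p * pt h p / h p ^ 2 := pt_div (dP i) dh h0
    have fτ : px i (fun q => 1 / h q) p = -(px i h p) / h p ^ 2 := px_one_div i dh h0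
    have f1 : (∑ j, P j p / h p * px j (fun q => P i q / h q) p)
        = (∑ j, px j (fun q => P i q * P j q / h q) p) / h p
          - P i p * (∑ j, px j (P j) p) / h p ^ 2 := by
      calc (∑ j, P j p / h p * px j (fun q => P i q / h q) p)
          = ∑ j, (px j (fun q => P i q * P j q / h q) p / h p
              - P i p * px j (P j) p / h p ^ 2) := Finset.sum_congr rfl fun j _ => by
            rw [px_div j (dP i) dh h0, px_mul_div j (dP i) (dP j) dh h0]
            all_goals ring
        _ = _ := by
            rw [Finset.sum_sub_distrib, ← Finset.sum_div, ← Finset.sum_div, ← Finset.mul_sum,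
              Finset.sum_div]
    have f2 : (∑ A : Finset (Fin m), ∑ I : Finset (Fin n), ∑ j,
          if A.card = I.card ∧ j ∈ I ∧ i ∉ I.erase j then
            (-1 : ℝ) ^ (ordIdx I j + ordIdx (I.erase j) i)
              * (M A (insert i (I.erase j)) p / h p) * px j (fun q => M A I q / h q) p
          else 0)
        = (∑ A : Finset (Fin m), ∑ I : Finset (Fin n), ∑ j,
            if A.card = I.card ∧ j ∈ I ∧ i ∉ I.erase j then
              (-1 : ℝ) ^ (ordIdx I j + ordIdx (I.erase j) i) *
                px j (fun q => M A (insert i (I.erase j)) q * M A I q / h q) p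
            else 0) / h p
          - (∑ A : Finset (Fin m), ∑ I : Finset (Fin n), ∑ j,
            if A.card = I.card ∧ j ∈ I ∧ i ∉ I.erase j then
              (-1 : ℝ) ^ (ordIdx I j + ordIdx (I.erase j) i) * M A I p
                * px j (M A (insert i (I.erase j))) p
            else 0) / h p ^ 2 := by
      calc (∑ A : Finset (Fin m), ∑ I : Finset (Fin n), ∑ j,
            if A.card = I.card ∧ j ∈ I ∧ i ∉ I.erase j then
              (-1 : ℝ) ^ (ordIdx I j + ordIdx (I.erase j) i)
                * (M A (insert i (I.erase j)) p / h p) * px j (fun q => M A I q / h q) p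
            else 0)
          = ∑ A : Finset (Fin m), ∑ I : Finset (Fin n), ∑ j,
              ((if A.card = I.card ∧ j ∈ I ∧ i ∉ I.erase j then
                (-1 : ℝ) ^ (ordIdx I j + ordIdx (I.erase j) i) *
                  px j (fun q => M A (insert i (I.erase j)) q * M A I q / h q) p
              else 0) / h p
              - (if A.card = I.card ∧ j ∈ I ∧ i ∉ I.erase j then
                (-1 : ℝ) ^ (ordIdx I j + ordIdx (I.erase j) i) * M A I p
                  * px j (M A (insert i (I.erase j))) p
              else 0) / h p ^ 2) :=
            Finset.sum_congr rfl fun A _ => Finset.sum_congr rfl fun I _ =>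
              Finset.sum_congr rfl fun j _ => by
                by_cases hc : A.card = I.card ∧ j ∈ I ∧ i ∉ I.erase j
                · simp only [if_pos hc]
                  rw [px_div j (dM A I) dh h0,
                    px_mul_div j (dM A (insert i (I.erase j))) (dM A I) dh h0]
                  all_goals ring
                · simp only [if_neg hc]
                  norm_num
        _ = _ := by
            simp only [Finset.sum_sub_distrib, ← Finset.sum_div]
    have f3 : (∑ A : Finset (Fin m), ∑ I : Finset (Fin n),
          if A.card = I.card ∧ 1 ≤ A.card then
            M A I p / h p * px i (fun q => M A I q / h q) p
          else 0)
        = (∑ A : Finset (Fin m), ∑ I : Finset (Fin n),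
            if A.card = I.card ∧ 1 ≤ A.card then M A I p * px i (M A I) p else 0) / h p ^ 2
          - (∑ A : Finset (Fin m), ∑ I : Finset (Fin n),
            if A.card = I.card ∧ 1 ≤ A.card then (M A I p) ^ 2 else 0)
              * px i h p / h p ^ 3 := by
      calc (∑ A : Finset (Fin m), ∑ I : Finset (Fin n),
            if A.card = I.card ∧ 1 ≤ A.card then
              M A I p / h p * px i (fun q => M A I q / h q) p
            else 0)
          = ∑ A : Finset (Fin m), ∑ I : Finset (Fin n),
              ((if A.card = I.card ∧ 1 ≤ A.card then M A I p * px i (M A I) p else 0) / h p ^ 2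
              - (if A.card = I.card ∧ 1 ≤ A.card then (M A I p) ^ 2 else 0)
                  * (px i h p / h p ^ 3)) :=
            Finset.sum_congr rfl fun A _ => Finset.sum_congr rfl fun I _ => by
              by_cases hc : A.card = I.card ∧ 1 ≤ A.card
              · simp only [if_pos hc]
                rw [px_div i (dM A I) dh h0]
                all_goals ring
              · simp only [if_neg hc]
                norm_num
        _ = _ := by
            simp only [Finset.sum_sub_distrib, ← Finset.sum_div, ← Finset.sum_mul]
            rw [mul_div_assoc]
    have dM2 : ∀ (A : Finset (Fin m)) (I : Finset (Fin n)), DifferentiableAt ℝ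
        (fun q => if A.card = I.card ∧ 1 ≤ A.card then (M A I q) ^ 2 else 0) p := by
      intro A I
      by_cases hc : A.card = I.card ∧ 1 ≤ A.card
      · simp only [if_pos hc]
        exact (dM A I).pow 2
      · simp only [if_neg hc]
        exact differentiableAt_const 0
    have dSin : ∀ A : Finset (Fin m), DifferentiableAt ℝ
        (fun q => ∑ I : Finset (Fin n),
          if A.card = I.card ∧ 1 ≤ A.card then (M A I q) ^ 2 else 0) p :=
      fun A => DifferentiableAt.fun_sum fun I _ => dM2 A I
    have dS : DifferentiableAt ℝ
        (fun q => ∑ A : Finset (Fin m), ∑ I : Finset (Fin n),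
          if A.card = I.card ∧ 1 ≤ A.card then (M A I q) ^ 2 else 0) p :=
      DifferentiableAt.fun_sum fun A _ => dSin A
    have dN : DifferentiableAt ℝ
        (fun q => 1 + ∑ A : Finset (Fin m), ∑ I : Finset (Fin n),
          if A.card = I.card ∧ 1 ≤ A.card then (M A I q) ^ 2 else 0) p :=
      dS.const_add 1
    have fdS : px i (fun q => ∑ A : Finset (Fin m), ∑ I : Finset (Fin n),
          if A.card = I.card ∧ 1 ≤ A.card then (M A I q) ^ 2 else 0) p
        = 2 * (∑ A : Finset (Fin m), ∑ I : Finset (Fin n),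
            if A.card = I.card ∧ 1 ≤ A.card then M A I p * px i (M A I) p else 0) := by
      show fderiv ℝ _ p (0, Pi.single i 1) = _
      rw [fderiv_fun_sum (fun A _ => dSin A), ContinuousLinearMap.sum_apply]
      rw [show (2 : ℝ) * (∑ A : Finset (Fin m), ∑ I : Finset (Fin n),
            if A.card = I.card ∧ 1 ≤ A.card then M A I p * px i (M A I) p else 0)
          = ∑ A : Finset (Fin m), ∑ I : Finset (Fin n),
            if A.card = I.card ∧ 1 ≤ A.card then 2 * (M A I p * px i (M A I) p) else 0 by
        simp only [Finset.mul_sum, mul_ite, mul_zero]]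
      refine Finset.sum_congr rfl fun A _ => ?_
      rw [fderiv_fun_sum (fun I _ => dM2 A I), ContinuousLinearMap.sum_apply]
      refine Finset.sum_congr rfl fun I _ => ?_
      by_cases hc : A.card = I.card ∧ 1 ≤ A.card
      · simp only [if_pos hc]
        have hsq : (fun q => (M A I q) ^ 2) = fun q => M A I q * M A I q := by
          funext q; ring
        rw [hsq]
        have := fd_mul (f := M A I) (g := M A I) (w := ((0 : ℝ), Pi.single i 1))
          (dM A I) (dM A I)
        rw [this]
        show _ = 2 * (M A I p * px i (M A I) p)
        simp only [px]
        ring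
      · simp only [if_neg hc]
        simp
    have f4 : px i (fun q => (1 + ∑ A : Finset (Fin m), ∑ I : Finset (Fin n),
          if A.card = I.card ∧ 1 ≤ A.card then (M A I q) ^ 2 else 0) / h q) p
        = 2 * (∑ A : Finset (Fin m), ∑ I : Finset (Fin n),
            if A.card = I.card ∧ 1 ≤ A.card then M A I p * px i (M A I) p else 0) / h p
          - (1 + ∑ A : Finset (Fin m), ∑ I : Finset (Fin n),
            if A.card = I.card ∧ 1 ≤ A.card then (M A I p) ^ 2 else 0)
              * px i h p / h p ^ 2 := by
      rw [px_div i dN dh h0]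
      have h1 : px i (fun q => 1 + ∑ A : Finset (Fin m), ∑ I : Finset (Fin n),
            if A.card = I.card ∧ 1 ≤ A.card then (M A I q) ^ 2 else 0) p
          = 2 * (∑ A : Finset (Fin m), ∑ I : Finset (Fin n),
            if A.card = I.card ∧ 1 ≤ A.card then M A I p * px i (M A I) p else 0) := by
        show fderiv ℝ _ p (0, Pi.single i 1) = _
        rw [fderiv_const_add]
        exact fdS
      rw [h1]
    have R3 : (∑ A : Finset (Fin m), ∑ I : Finset (Fin n), ∑ j,
          if A.card = I.card ∧ j ∈ I ∧ i ∉ I.erase j then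
            (-1 : ℝ) ^ (ordIdx I j + ordIdx (I.erase j) i) * M A I p
              * px j (M A (insert i (I.erase j))) p
          else 0)
        = (∑ A : Finset (Fin m), ∑ I : Finset (Fin n),
            if A.card = I.card ∧ 1 ≤ A.card then M A I p * px i (M A I) p else 0) := by
      refine Finset.sum_congr rfl fun A _ => Finset.sum_congr rfl fun I _ => ?_
      by_cases hAI : A.card = I.card
      · by_cases hiI : i ∈ I
        · rw [Finset.sum_eq_single_of_mem i (Finset.mem_univ i) ?_]
          · rw [if_pos ⟨hAI, hiI, Finset.notMem_erase i I⟩, Finset.insert_erase hiI,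
              ordIdx_erase_self hiI,
              if_pos ⟨hAI, by rw [hAI]; exact Finset.card_pos.mpr ⟨i, hiI⟩⟩]
            have hpow : (-1 : ℝ) ^ (ordIdx I i + ordIdx I i) = 1 :=
              Even.neg_one_pow ⟨_, rfl⟩
            linear_combination (M A I p * px i (M A I) p) * hpow
          · intro b _ hbi
            rw [if_neg]
            rintro ⟨-, hbI, hni⟩
            exact hni (Finset.mem_erase.mpr ⟨Ne.symm hbi, hiI⟩)
        · have hL : (∑ j, if A.card = I.card ∧ j ∈ I ∧ i ∉ I.erase j then
                (-1 : ℝ) ^ (ordIdx I j + ordIdx (I.erase j) i) * M A I p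
                  * px j (M A (insert i (I.erase j))) p
              else 0) = M A I p * px i (M A I) p := by
            calc (∑ j, if A.card = I.card ∧ j ∈ I ∧ i ∉ I.erase j then
                  (-1 : ℝ) ^ (ordIdx I j + ordIdx (I.erase j) i) * M A I p
                    * px j (M A (insert i (I.erase j))) p
                else 0)
                = ∑ j, (if j ∈ I then
                    M A I p * ((-1 : ℝ) ^ (ordIdx I j + ordIdx (I.erase j) i)
                      * px j (M A (insert i (I.erase j))) p)
                  else 0) := Finset.sum_congr rfl fun j _ => by
                  by_cases hjI : j ∈ I
                  · rw [if_pos ⟨hAI, hjI, fun hc => hiI (Finset.mem_of_mem_erase hc)⟩,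
                      if_pos hjI]
                    ring
                  · rw [if_neg (by tauto), if_neg hjI]
              _ = ∑ j ∈ I, M A I p * ((-1 : ℝ) ^ (ordIdx I j + ordIdx (I.erase j) i)
                    * px j (M A (insert i (I.erase j))) p) := by
                  rw [Finset.sum_ite_mem, Finset.univ_inter]
              _ = M A I p * ∑ j ∈ I, (-1 : ℝ) ^ (ordIdx I j + ordIdx (I.erase j) i)
                    * px j (M A (insert i (I.erase j))) p := by rw [Finset.mul_sum]
              _ = M A I p * px i (M A I) p := by rw [key2 A I i hiI hAI]
          rw [hL]
          by_cases hA1 : 1 ≤ A.card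
          · rw [if_pos ⟨hAI, hA1⟩]
          · rw [if_neg (by tauto)]
            have hAe : A = ∅ := Finset.card_eq_zero.mp (by omega)
            have hIe : I = ∅ := Finset.card_eq_zero.mp (by omega)
            subst hAe; subst hIe
            rw [pxM00 i, mul_zero]
      · rw [if_neg (fun hc => hAI hc.1)]
        apply Finset.sum_eq_zero
        intro j _
        rw [if_neg (by tauto)]
        
    linear_combination f0 + f1 + f2 - f3 - (1 / h p) * fτ + (1 / h p) * s3 + (1 / h p) * f4
      - (P i p / h p ^ 2) * s1 - (1 / h p ^ 2) * R3
  · -- equation for m_{A,I}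
    intro A I hAI hA
    simp only [hv, hmf, hd]
    have s1 := sn1 p hp
    have s4 := sn4 p hp A I hAI hA
    have g0 : pt (fun q => M A I q / h q) p
        = pt (M A I) p / h p - M A I p * pt h p / h p ^ 2 := pt_div (dM A I) dh h0
    have g1 : (∑ j, P j p / h p * px j (fun q => M A I q / h q) p)
        = (∑ j, P j p * px j (M A I) p) / h p ^ 2
          - M A I p * (∑ j, P j p * px j h p) / h p ^ 3 := by
      calc (∑ j, P j p / h p * px j (fun q => M A I q / h q) p)
          = ∑ j, (P j p * px j (M A I) p / h p ^ 2
              - M A I p * (P j p * px j h p) / h p ^ 3) := Finset.sum_congr rfl fun j _ => by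
            rw [px_div j (dM A I) dh h0]
            all_goals ring
        _ = _ := by
            rw [Finset.sum_sub_distrib, ← Finset.sum_div, ← Finset.sum_div, ← Finset.mul_sum,
              Finset.sum_div]
    have g2 : (∑ j, px j (fun q => P j q / h q) p)
        = (∑ j, px j (P j) p) / h p - (∑ j, P j p * px j h p) / h p ^ 2 := by
      calc (∑ j, px j (fun q => P j q / h q) p)
          = ∑ j, (px j (P j) p / h p - P j p * px j h p / h p ^ 2) :=
            Finset.sum_congr rfl fun j _ => by
              rw [px_div j (dP j) dh h0]
              all_goals ring
        _ = _ := by rw [Finset.sum_sub_distrib, ← Finset.sum_div, ← Finset.sum_div]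
    have g3 : (∑ i, ∑ j, if i ∈ I ∧ j ∉ I.erase i then
          (-1 : ℝ) ^ (ordIdx (I.erase i) j + ordIdx I i)
            * (M A (insert j (I.erase i)) p / h p) * px i (fun q => P j q / h q) p
          else 0)
        = (∑ i, ∑ j, if i ∈ I ∧ j ∉ I.erase i then
            (-1 : ℝ) ^ (ordIdx (I.erase i) j + ordIdx I i) *
              px i (fun q => M A (insert j (I.erase i)) q * P j q / h q) p
            else 0) / h p
          - (∑ i, ∑ j, if i ∈ I ∧ j ∉ I.erase i then
            (-1 : ℝ) ^ (ordIdx (I.erase i) j + ordIdx I i) * P j p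
              * px i (M A (insert j (I.erase i))) p
            else 0) / h p ^ 2 := by
      calc (∑ i, ∑ j, if i ∈ I ∧ j ∉ I.erase i then
            (-1 : ℝ) ^ (ordIdx (I.erase i) j + ordIdx I i)
              * (M A (insert j (I.erase i)) p / h p) * px i (fun q => P j q / h q) p
            else 0)
          = ∑ i, ∑ j,
              ((if i ∈ I ∧ j ∉ I.erase i then
                (-1 : ℝ) ^ (ordIdx (I.erase i) j + ordIdx I i) *
                  px i (fun q => M A (insert j (I.erase i)) q * P j q / h q) p
              else 0) / h p
              - (if i ∈ I ∧ j ∉ I.erase i then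
                (-1 : ℝ) ^ (ordIdx (I.erase i) j + ordIdx I i) * P j p
                  * px i (M A (insert j (I.erase i))) p
              else 0) / h p ^ 2) :=
            Finset.sum_congr rfl fun i _ => Finset.sum_congr rfl fun j _ => by
              by_cases hc : i ∈ I ∧ j ∉ I.erase i
              · simp only [if_pos hc]
                rw [px_div i (dP j) dh h0,
                  px_mul_div i (dM A (insert j (I.erase i))) (dP j) dh h0]
                all_goals ring
              · simp only [if_neg hc]
                norm_num
        _ = _ := by
            simp only [Finset.sum_sub_distrib, ← Finset.sum_div]
    have g4 : (∑ α, ∑ i, if α ∈ A ∧ i ∈ I then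
          (-1 : ℝ) ^ (ordIdx A α + ordIdx I i)
            * (M (A.erase α) (I.erase i) p / h p) * px i (fun q => D α q / h q) p
          else 0)
        = (∑ α, ∑ i, if α ∈ A ∧ i ∈ I then
            (-1 : ℝ) ^ (ordIdx A α + ordIdx I i) *
              px i (fun q => M (A.erase α) (I.erase i) q * D α q / h q) p
            else 0) / h p
          - (∑ α, ∑ i, if α ∈ A ∧ i ∈ I then
            (-1 : ℝ) ^ (ordIdx A α + ordIdx I i) * D α p
              * px i (M (A.erase α) (I.erase i)) p
            else 0) / h p ^ 2 := by
      calc (∑ α, ∑ i, if α ∈ A ∧ i ∈ I then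
            (-1 : ℝ) ^ (ordIdx A α + ordIdx I i)
              * (M (A.erase α) (I.erase i) p / h p) * px i (fun q => D α q / h q) p
            else 0)
          = ∑ α, ∑ i,
              ((if α ∈ A ∧ i ∈ I then
                (-1 : ℝ) ^ (ordIdx A α + ordIdx I i) *
                  px i (fun q => M (A.erase α) (I.erase i) q * D α q / h q) p
              else 0) / h p
              - (if α ∈ A ∧ i ∈ I then
                (-1 : ℝ) ^ (ordIdx A α + ordIdx I i) * D α p
                  * px i (M (A.erase α) (I.erase i)) p
              else 0) / h p ^ 2) :=
            Finset.sum_congr rfl fun α _ => Finset.sum_congr rfl fun i _ => by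
              by_cases hc : α ∈ A ∧ i ∈ I
              · simp only [if_pos hc]
                rw [px_div i (dD α) dh h0,
                  px_mul_div i (dM (A.erase α) (I.erase i)) (dD α) dh h0]
                all_goals ring
              · simp only [if_neg hc]
                norm_num
        _ = _ := by
            simp only [Finset.sum_sub_distrib, ← Finset.sum_div]
    have R4a : (∑ i, ∑ j, if i ∈ I ∧ j ∉ I.erase i then
          (-1 : ℝ) ^ (ordIdx (I.erase i) j + ordIdx I i) * P j p
            * px i (M A (insert j (I.erase i))) p
          else 0)
        = ∑ j, P j p * px j (M A I) p := by
      rw [Finset.sum_comm]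
      refine Finset.sum_congr rfl fun j _ => ?_
      by_cases hjI : j ∈ I
      · rw [Finset.sum_eq_single_of_mem j (Finset.mem_univ j) ?_]
        · rw [if_pos ⟨hjI, Finset.notMem_erase j I⟩, Finset.insert_erase hjI,
            ordIdx_erase_self hjI]
          have hpow : (-1 : ℝ) ^ (ordIdx I j + ordIdx I j) = 1 :=
            Even.neg_one_pow ⟨_, rfl⟩
          linear_combination (P j p * px j (M A I) p) * hpow
        · intro b _ hbj
          rw [if_neg]
          rintro ⟨hbI, hnj⟩
          exact hnj (Finset.mem_erase.mpr ⟨Ne.symm hbj, hjI⟩)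
      · calc (∑ i, if i ∈ I ∧ j ∉ I.erase i then
              (-1 : ℝ) ^ (ordIdx (I.erase i) j + ordIdx I i) * P j p
                * px i (M A (insert j (I.erase i))) p
            else 0)
            = ∑ i, (if i ∈ I then
                P j p * ((-1 : ℝ) ^ (ordIdx I i + ordIdx (I.erase i) j)
                  * px i (M A (insert j (I.erase i))) p)
              else 0) := Finset.sum_congr rfl fun i _ => by
              by_cases hiI : i ∈ I
              · rw [if_pos ⟨hiI, fun hc => hjI (Finset.mem_of_mem_erase hc)⟩, if_pos hiI,
                  add_comm (ordIdx (I.erase i) j) (ordIdx I i)]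
                ring
              · rw [if_neg (by tauto), if_neg hiI]
          _ = ∑ i ∈ I, P j p * ((-1 : ℝ) ^ (ordIdx I i + ordIdx (I.erase i) j)
                * px i (M A (insert j (I.erase i))) p) := by
              rw [Finset.sum_ite_mem, Finset.univ_inter]
          _ = P j p * ∑ i ∈ I, (-1 : ℝ) ^ (ordIdx I i + ordIdx (I.erase i) j)
                * px i (M A (insert j (I.erase i))) p := by rw [Finset.mul_sum]
          _ = P j p * px j (M A I) p := by rw [key2 A I j hjI hAI]
    have R4b : (∑ α, ∑ i, if α ∈ A ∧ i ∈ I then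
          (-1 : ℝ) ^ (ordIdx A α + ordIdx I i) * D α p
            * px i (M (A.erase α) (I.erase i)) p
          else 0) = 0 := by
      apply Finset.sum_eq_zero
      intro α _
      by_cases hαA : α ∈ A
      · calc (∑ i, if α ∈ A ∧ i ∈ I then
              (-1 : ℝ) ^ (ordIdx A α + ordIdx I i) * D α p
                * px i (M (A.erase α) (I.erase i)) p
            else 0)
            = ∑ i, (if i ∈ I then
                ((-1 : ℝ) ^ (ordIdx A α) * D α p) *
                  ((-1 : ℝ) ^ (ordIdx I i) * px i (M (A.erase α) (I.erase i)) p)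
              else 0) := Finset.sum_congr rfl fun i _ => by
              by_cases hiI : i ∈ I
              · rw [if_pos ⟨hαA, hiI⟩, if_pos hiI, pow_add]
                ring
              · rw [if_neg (by tauto), if_neg hiI]
          _ = ∑ i ∈ I, ((-1 : ℝ) ^ (ordIdx A α) * D α p) *
                ((-1 : ℝ) ^ (ordIdx I i) * px i (M (A.erase α) (I.erase i)) p) := by
              rw [Finset.sum_ite_mem, Finset.univ_inter]
          _ = ((-1 : ℝ) ^ (ordIdx A α) * D α p) *
                ∑ i ∈ I, (-1 : ℝ) ^ (ordIdx I i) * px i (M (A.erase α) (I.erase i)) p := by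
              rw [Finset.mul_sum]
          _ = 0 := by rw [key1 A I α hαA hAI, mul_zero]
      · apply Finset.sum_eq_zero
        intro i _
        rw [if_neg (by tauto)]
    linear_combination g0 + g1 + g3 + g4 - (M A I p / h p) * g2 + (1 / h p) * s4
      - (M A I p / h p ^ 2) * s1 - (1 / h p ^ 2) * R4a - (1 / h p ^ 2) * R4b
end
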